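/- arXiv:1407.1366 — 5 statements merged into one kernel-verified Lean document; each statement's English description precedes it below -/
import Mathlib

section
/- In a triangulated category that admits arbitrary (small) coproducts, every idempotent endomorphism splits; that is, if e : X → X satisfies e ∘ e = e, then there exist an object Y and morphisms p : X → Y, i : Y → X with p ∘ i = id_Y and i ∘ p = e. -/
/-!
STATEMENT 0 (Bökstedt–Neeman): In a triangulated category with arbitrary small
coproducts, every idempotent endomorphism splits.
-/

open CategoryTheory CategoryTheory.Limits CategoryTheory.Pretriangulated

universe v u

theorem idempotent_splits_in_triangulated_with_coproducts
    {C : Type u} [Category.{v} C] [Preadditive C] [HasZeroObject C]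
    [HasShift C ℤ] [∀ n : ℤ, (shiftFunctor C n).Additive] [Pretriangulated C]
    [HasCoproducts.{v} C]
    (X : C) (e : X ⟶ X) (he : e ≫ e = e) :
    ∃ (Y : C) (p : X ⟶ Y) (i : Y ⟶ X), i ≫ p = 𝟙 Y ∧ p ≫ i = e := by
  classical
  -- The telescope object `T = ∐_{n ∈ ℕ} X`.
  let F : ULift.{v} ℕ → C := fun _ => X
  let T : C := ∐ F
  let ι : ℕ → (X ⟶ T) := fun n => Sigma.ι F (ULift.up n)
  -- `g = 1 - (e · shift)`.
  let g : T ⟶ T := Sigma.desc (fun n => ι n.down - e ≫ ι (n.down + 1))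
  have hιg : ∀ n : ℕ, ι n ≫ g = ι n - e ≫ ι (n + 1) := fun n => by
    simp [g, ι]
  -- `g` is a split monomorphism, with explicit retraction `h`.
  let h : T ⟶ T := Sigma.desc
    (fun n => ι n.down - e ≫ ι n.down - ∑ k ∈ Finset.range n.down, e ≫ ι k)
  have hιh : ∀ n : ℕ,
      ι n ≫ h = ι n - e ≫ ι n - ∑ k ∈ Finset.range n, e ≫ ι k := fun n => by
    simp [h, ι]
  have h2 : ∀ k : ℕ, e ≫ e ≫ ι k = e ≫ ι k := fun k => by
    rw [← Category.assoc, he]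
  have hgh : g ≫ h = 𝟙 T := by
    apply Sigma.hom_ext
    rintro ⟨n⟩
    have key : ι n ≫ g ≫ h = ι n := by
      rw [← Category.assoc, hιg n, Preadditive.sub_comp, Category.assoc,
        hιh n, hιh (n + 1), Preadditive.comp_sub, Preadditive.comp_sub,
        Preadditive.comp_sum, Finset.sum_range_succ]
      simp only [h2]
      abel
    exact key.trans (Category.comp_id _).symm
  -- The cone of `g`.
  obtain ⟨Y, q, d, hTri⟩ := Pretriangulated.distinguished_cocone_triangle g
  have hgq : g ≫ q = 0 := comp_distTriang_mor_zero₁₂ _ hTri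
  -- The connecting map `d` vanishes since `g` is a split mono.
  have hd : d = 0 := by
    have h31 : d ≫ g⟦(1 : ℤ)⟧' = 0 := comp_distTriang_mor_zero₃₁ _ hTri
    calc d = d ≫ (𝟙 T)⟦(1 : ℤ)⟧' := by simp
      _ = d ≫ (g ≫ h)⟦(1 : ℤ)⟧' := by rw [hgh]
      _ = (d ≫ g⟦(1 : ℤ)⟧') ≫ h⟦(1 : ℤ)⟧' := by
          rw [Functor.map_comp, Category.assoc]
      _ = 0 := by rw [h31, zero_comp]
  -- Basic relations among the maps `ι n ≫ q`.
  have haux : ∀ n : ℕ, ι n ≫ q = e ≫ ι (n + 1) ≫ q := fun n => by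
    have h0 : (ι n ≫ g) ≫ q = 0 := by rw [Category.assoc, hgq, comp_zero]
    rw [hιg n, Preadditive.sub_comp, sub_eq_zero, Category.assoc] at h0
    exact h0
  have heq : ∀ n : ℕ, e ≫ ι n ≫ q = ι n ≫ q := fun n => by
    rw [haux n, ← Category.assoc, ← Category.assoc, he, Category.assoc]
  have hall : ∀ n : ℕ, ι n ≫ q = ι 0 ≫ q := by
    intro n
    induction n with
    | zero => rfl
    | succ n ih => rw [← ih, haux n, heq (n + 1)]
  -- The map `r : T ⟶ X` given by `e` on each component factors through `q`.
  let r : T ⟶ X := Sigma.desc (fun _ => e)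
  have hιr : ∀ n : ℕ, ι n ≫ r = e := fun n => by simp [r, ι]
  have hgr : g ≫ r = 0 := by
    apply Sigma.hom_ext
    rintro ⟨n⟩
    have key : ι n ≫ g ≫ r = 0 := by
      rw [← Category.assoc, hιg n, Preadditive.sub_comp, Category.assoc,
        hιr n, hιr (n + 1), he, sub_self]
    simpa [ι] using key
  obtain ⟨i₀, hi₀⟩ := Triangle.yoneda_exact₂ _ hTri r hgr
  let i : Y ⟶ X := i₀
  have hi : q ≫ i = r := hi₀.symm
  refine ⟨Y, ι 0 ≫ q, i, ?_, ?_⟩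
  · -- `i ≫ ι 0 ≫ q = 𝟙 Y`
    have hq0 : q ≫ (i ≫ ι 0 ≫ q - 𝟙 Y) = 0 := by
      rw [Preadditive.comp_sub, Category.comp_id, sub_eq_zero]
      apply Sigma.hom_ext
      rintro ⟨n⟩
      have key : ι n ≫ q ≫ i ≫ ι 0 ≫ q = ι n ≫ q := by
        rw [reassoc_of% hi, reassoc_of% (hιr n), heq 0, hall n]
      simpa [ι] using key
    obtain ⟨β, hβ⟩ := Triangle.yoneda_exact₃ _ hTri _ hq0
    obtain ⟨β', hβ2⟩ : ∃ β' : (shiftFunctor C (1 : ℤ)).obj T ⟶ Y,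
        i ≫ ι 0 ≫ q - 𝟙 Y = d ≫ β' := ⟨β, hβ⟩
    rw [hd, zero_comp,
      sub_eq_zero] at hβ2
    exact hβ2
  · -- `(ι 0 ≫ q) ≫ i = e`
    rw [Category.assoc, hi, hιr 0]
end

section
/- Let T be a triangulated category with arbitrary products. Let (S_m)_{m ∈ ℤ} be a family of strictly full triangulated subcategories of T, each closed under arbitrary products in T, with ∩_m S_m = {0}. Let ⋯ → X_2 → X_1 be an inverse system in T such that X_j ∈ S_{a_j} with a_j → −∞, and assume the subcategories are nested: S_m ⊆ S_{m'} for m ≤ m'. Then the homotopy limit holim_j X_j (defined as a fiber of 1 − shift on ∏_j X_j) is a zero object. -/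
/-!
STATEMENT 6: a homotopy limit of a tower `⋯ → X₂ → X₁` with `X_j ∈ S_{a_j}`,
`a_j → −∞`, for a nested family of strictly full triangulated subcategories
closed under products with zero intersection, is a zero object.
-/

open CategoryTheory CategoryTheory.Limits CategoryTheory.Pretriangulated Opposite ZeroObject

set_option maxHeartbeats 1000000

attribute [local simp] prod.lift_fst prod.lift_snd prod.lift_fst_assoc prod.lift_snd_assoc

universe v u

variable {C : Type u} [Category.{v} C] [Preadditive C] [HasZeroObject C]
  [HasShift C ℤ] [∀ n : ℤ, (shiftFunctor C n).Additive] [Pretriangulated C]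
  [HasProducts.{v} C]

/-- A strictly full triangulated subcategory, given by its set of objects. -/
structure IsTriangulatedSub (S : Set C) : Prop where
  zero_mem : (0 : C) ∈ S
  iso_closed : ∀ {X Y : C}, (X ≅ Y) → X ∈ S → Y ∈ S
  shift_mem : ∀ (X : C) (n : ℤ), X ∈ S → (X⟦n⟧ : C) ∈ S
  ext_mem : ∀ (T : Triangle C), T ∈ (distTriang C) → T.obj₁ ∈ S → T.obj₂ ∈ S → T.obj₃ ∈ S

namespace HolimAux

/-- Binary product decomposition of a product over `ULift Bool`. -/
@[simps]
noncomputable def prodFanIso (G : ULift.{v} Bool → C) :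
    (∏ᶜ G) ≅ (G ⟨false⟩) ⨯ (G ⟨true⟩) where
  hom := prod.lift (Pi.π G ⟨false⟩) (Pi.π G ⟨true⟩)
  inv := Pi.lift (fun b => match b with
    | ⟨false⟩ => prod.fst
    | ⟨true⟩ => prod.snd)
  hom_inv_id := by
    ext ⟨b⟩
    cases b <;> simp
  inv_hom_id := by
    apply Limits.prod.hom_ext <;> simp

/-- The binary product of two distinguished triangles is distinguished (existence form). -/
lemma prod_triangle_distinguished (T₁ T₂ : Triangle C)
    (h₁ : T₁ ∈ distTriang C) (h₂ : T₂ ∈ distTriang C) :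
    ∃ w, Triangle.mk (prod.map T₁.mor₁ T₂.mor₁) (prod.map T₁.mor₂ T₂.mor₂) w ∈ distTriang C := by
  let F : ULift.{v} Bool → Triangle C := fun b => match b with
    | ⟨false⟩ => T₁
    | ⟨true⟩ => T₂
  have hF : productTriangle F ∈ distTriang C :=
    productTriangle_distinguished F (by rintro ⟨(_ | _)⟩ <;> assumption)
  let e₁ : (∏ᶜ fun b => (F b).obj₁) ≅ T₁.obj₁ ⨯ T₂.obj₁ := prodFanIso (fun b => (F b).obj₁)
  let e₂ : (∏ᶜ fun b => (F b).obj₂) ≅ T₁.obj₂ ⨯ T₂.obj₂ := prodFanIso (fun b => (F b).obj₂)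
  let e₃ : (∏ᶜ fun b => (F b).obj₃) ≅ T₁.obj₃ ⨯ T₂.obj₃ := prodFanIso (fun b => (F b).obj₃)
  refine ⟨e₃.inv ≫ (productTriangle F).mor₃ ≫ (shiftFunctor C (1 : ℤ)).map e₁.hom, ?_⟩
  refine isomorphic_distinguished _ hF _ ?_
  refine Triangle.isoMk _ _ e₁.symm e₂.symm e₃.symm ?_ ?_ ?_
  · show prod.map T₁.mor₁ T₂.mor₁ ≫ e₂.inv = e₁.inv ≫ Limits.Pi.map (fun b => (F b).mor₁)
    apply limit.hom_ext
    rintro ⟨⟨(_ | _)⟩⟩ <;> simp [e₁, e₂, F]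
  · show prod.map T₁.mor₂ T₂.mor₂ ≫ e₃.inv = e₂.inv ≫ Limits.Pi.map (fun b => (F b).mor₂)
    apply limit.hom_ext
    rintro ⟨⟨(_ | _)⟩⟩ <;> simp [e₂, e₃, F]
  · show (e₃.inv ≫ (productTriangle F).mor₃ ≫ (shiftFunctor C (1 : ℤ)).map e₁.hom) ≫
        (shiftFunctor C (1 : ℤ)).map e₁.inv = e₃.inv ≫ (productTriangle F).mor₃
    have key : ∀ {W : C} (x : W ⟶ (∏ᶜ fun b => (F b).obj₁)⟦(1 : ℤ)⟧),
        (x ≫ (shiftFunctor C (1 : ℤ)).map e₁.hom) ≫ (shiftFunctor C (1 : ℤ)).map e₁.inv = x := by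
      intro W x
      rw [Category.assoc, ← Functor.map_comp, Iso.hom_inv_id, CategoryTheory.Functor.map_id,
        Category.comp_id]
    exact (Category.assoc _ _ _).trans (congrArg (e₃.inv ≫ ·) (key _))

variable (X : ℕ → C) (d : ∀ j : ℕ, X (j + 1) ⟶ X j) (N : ℕ)

/-- objects below the cut -/
abbrev f₁ : {i : ULift.{v} ℕ // i.down < N} → C := fun i => X i.1.down

/-- objects above the cut -/
abbrev f₂ : {i : ULift.{v} ℕ // N ≤ i.down} → C := fun i => X i.1.down

/-- splitting the product at the cut -/
noncomputable def splitIso :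
    (∏ᶜ fun i : ULift.{v} ℕ => X i.down) ≅ (∏ᶜ f₁ X N) ⨯ (∏ᶜ f₂ X N) where
  hom := prod.lift (Pi.lift fun i => Pi.π _ i.1) (Pi.lift fun i => Pi.π _ i.1)
  inv := Pi.lift fun i =>
    if h : i.down < N then prod.fst ≫ Pi.π (f₁ X N) ⟨i, h⟩
    else prod.snd ≫ Pi.π (f₂ X N) ⟨i, le_of_not_gt h⟩
  hom_inv_id := by
    apply limit.hom_ext
    rintro ⟨i⟩
    by_cases h : i.down < N <;> simp [h]
  inv_hom_id := by
    apply Limits.prod.hom_ext <;> (apply limit.hom_ext; rintro ⟨j⟩) <;> simp [j.2, Nat.not_lt_of_le j.2]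

/-- the strictly-lower-triangular part of `1 - shift` below the cut -/
noncomputable def s1 : (∏ᶜ f₁ X N) ⟶ (∏ᶜ f₁ X N) :=
  Pi.lift fun j =>
    if h : j.1.down + 1 < N then Pi.π (f₁ X N) ⟨⟨j.1.down + 1⟩, h⟩ ≫ d j.1.down else 0

/-- the cross term -/
noncomputable def t2 : (∏ᶜ f₂ X N) ⟶ (∏ᶜ f₁ X N) :=
  Pi.lift fun j =>
    if h : N ≤ j.1.down + 1 then Pi.π (f₂ X N) ⟨⟨j.1.down + 1⟩, h⟩ ≫ d j.1.down else 0

/-- the shift above the cut -/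
noncomputable def s2 : (∏ᶜ f₂ X N) ⟶ (∏ᶜ f₂ X N) :=
  Pi.lift fun j =>
    Pi.π (f₂ X N) ⟨⟨j.1.down + 1⟩, le_trans j.2 (Nat.le_succ _)⟩ ≫ d j.1.down

/-- powers of `s1` -/
noncomputable def sPow : ℕ → ((∏ᶜ f₁ X N) ⟶ (∏ᶜ f₁ X N))
  | 0 => 𝟙 _
  | (k + 1) => sPow k ≫ s1 X d N

lemma sPow_π (k : ℕ) : ∀ (j : {i : ULift.{v} ℕ // i.down < N}), N ≤ j.1.down + k →
    sPow X d N k ≫ Pi.π (f₁ X N) j = 0 := by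
  induction k with
  | zero => intro j hj; exact absurd j.2 (by omega)
  | succ k ih =>
    intro j hj
    have : s1 X d N ≫ Pi.π (f₁ X N) j =
        if h : j.1.down + 1 < N then Pi.π (f₁ X N) ⟨⟨j.1.down + 1⟩, h⟩ ≫ d j.1.down else 0 := by
      simp [s1]
    rw [sPow, Category.assoc, this]
    split
    · next h =>
      rw [← Category.assoc, ih ⟨⟨j.1.down + 1⟩, h⟩ (show N ≤ j.1.down + 1 + k by omega), zero_comp]
    · rw [comp_zero]

lemma sPow_N : sPow X d N N = 0 := by
  apply Limits.Pi.hom_ext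
  intro j
  simpa using sPow_π X d N N j (Nat.le_add_left _ _)

/-- geometric series inverse of `1 - s1` -/
noncomputable def uInv : (∏ᶜ f₁ X N) ⟶ (∏ᶜ f₁ X N) :=
  ∑ k ∈ Finset.range N, sPow X d N k

lemma s1_comm_sPow (k : ℕ) : s1 X d N ≫ sPow X d N k = sPow X d N k ≫ s1 X d N := by
  induction k with
  | zero => simp [sPow]
  | succ k ih => rw [sPow, ← Category.assoc, ih, Category.assoc]

lemma uInv_comp_s1 : uInv X d N ≫ s1 X d N = uInv X d N - 𝟙 _ := by
  have h1 : uInv X d N ≫ s1 X d N = ∑ k ∈ Finset.range N, sPow X d N (k + 1) := by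
    rw [uInv, Preadditive.sum_comp]
    rfl
  have h2 : ∑ k ∈ Finset.range (N + 1), sPow X d N k =
      (∑ k ∈ Finset.range N, sPow X d N (k + 1)) + sPow X d N 0 :=
    Finset.sum_range_succ' _ _
  have h3 : ∑ k ∈ Finset.range (N + 1), sPow X d N k = uInv X d N + sPow X d N N :=
    Finset.sum_range_succ _ _
  rw [h1]
  have := h2.symm.trans h3
  rw [sPow_N, add_zero, sPow] at this
  rw [← this]
  abel

lemma uInv_right : (𝟙 _ - s1 X d N) ≫ uInv X d N = 𝟙 _ := by
  have hcomm : s1 X d N ≫ uInv X d N = uInv X d N ≫ s1 X d N := by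
    rw [uInv, Preadditive.comp_sum, Preadditive.sum_comp]
    exact Finset.sum_congr rfl fun k _ => s1_comm_sPow X d N k
  rw [Preadditive.sub_comp, Category.id_comp, hcomm, uInv_comp_s1]
  abel

lemma uInv_left : uInv X d N ≫ (𝟙 _ - s1 X d N) = 𝟙 _ := by
  rw [Preadditive.comp_sub, Category.comp_id, uInv_comp_s1]
  abel

end HolimAux

open HolimAux in
theorem holim_vanishes_of_decreasing_membership
    (S : ℤ → Set C) (hS : ∀ m, IsTriangulatedSub (S m))
    (hprod : ∀ (m : ℤ) {ι : Type v} (f : ι → C), (∀ i, f i ∈ S m) → (∏ᶜ f) ∈ S m)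
    (hnested : ∀ m m' : ℤ, m ≤ m' → S m ⊆ S m')
    (hinter : ∀ Z : C, (∀ m, Z ∈ S m) → IsZero Z)
    (X : ℕ → C) (d : ∀ j : ℕ, X (j + 1) ⟶ X j)
    (a : ℕ → ℤ) (hX : ∀ j, X j ∈ S (a j))
    (ha : Filter.Tendsto a Filter.atTop Filter.atBot)
    -- the product of the tower and its shift endomorphism
    (H : C)
    (φ : H ⟶ ∏ᶜ (fun i : ULift.{v} ℕ => X i.down))
    (ψ : (∏ᶜ (fun i : ULift.{v} ℕ => X i.down)) ⟶ (H⟦(1 : ℤ)⟧ : C))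
    (htriangle : Triangle.mk φ
      (𝟙 (∏ᶜ (fun i : ULift.{v} ℕ => X i.down)) -
        Pi.lift (fun i : ULift.{v} ℕ =>
          Pi.π (fun i : ULift.{v} ℕ => X i.down) (ULift.up (i.down + 1)) ≫ d i.down)) ψ
      ∈ (distTriang C)) :
    IsZero H := by
  apply hinter
  intro m
  obtain ⟨N, hN⟩ : ∃ N : ℕ, ∀ j, N ≤ j → a j ≤ m :=
    Filter.eventually_atTop.1 (ha.eventually (Filter.eventually_le_atBot m))
  -- notation
  set g : (∏ᶜ (fun i : ULift.{v} ℕ => X i.down)) ⟶ (∏ᶜ (fun i : ULift.{v} ℕ => X i.down)) :=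
    𝟙 (∏ᶜ (fun i : ULift.{v} ℕ => X i.down)) -
      Pi.lift (fun i : ULift.{v} ℕ =>
        Pi.π (fun i : ULift.{v} ℕ => X i.down) (ULift.up (i.down + 1)) ≫ d i.down) with hg
  set e := splitIso X N with he
  set A : (∏ᶜ f₁ X N) ⟶ (∏ᶜ f₁ X N) := 𝟙 _ - s1 X d N with hA
  set C₂ : (∏ᶜ f₂ X N) ⟶ (∏ᶜ f₂ X N) := 𝟙 _ - s2 X d N with hC₂
  set B : (∏ᶜ f₂ X N) ⟶ (∏ᶜ f₁ X N) := -(t2 X d N) with hB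
  -- block decomposition of g
  have hhomfst : ∀ j, e.hom ≫ prod.fst ≫ Pi.π (f₁ X N) j =
      Pi.π (fun i : ULift.{v} ℕ => X i.down) j.1 := by
    intro j; simp [he, splitIso]
  have hhomsnd : ∀ j, e.hom ≫ prod.snd ≫ Pi.π (f₂ X N) j =
      Pi.π (fun i : ULift.{v} ℕ => X i.down) j.1 := by
    intro j; simp [he, splitIso]
  have hhomfst' : ∀ (j) {W : C} (k : X j.1.down ⟶ W), e.hom ≫ prod.fst ≫ Pi.π (f₁ X N) j ≫ k =
      Pi.π (fun i : ULift.{v} ℕ => X i.down) j.1 ≫ k := by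
    intro j W k
    rw [← Category.assoc, ← Category.assoc, Category.assoc e.hom, hhomfst j]
  have hhomsnd' : ∀ (j) {W : C} (k : X j.1.down ⟶ W), e.hom ≫ prod.snd ≫ Pi.π (f₂ X N) j ≫ k =
      Pi.π (fun i : ULift.{v} ℕ => X i.down) j.1 ≫ k := by
    intro j W k
    rw [← Category.assoc, ← Category.assoc, Category.assoc e.hom, hhomsnd j]
  have hgeh : g ≫ e.hom =
      e.hom ≫ prod.lift (prod.fst ≫ A + prod.snd ≫ B) (prod.snd ≫ C₂) := by
    apply Limits.prod.hom_ext
    · apply Limits.Pi.hom_ext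
      intro j
      by_cases h : j.1.down + 1 < N
      · have h' : ¬ (N ≤ j.1.down + 1) := by omega
        simp only [hg, hA, hB, s1, t2, Category.assoc, prod.lift_fst, prod.lift_fst_assoc,
          Preadditive.sub_comp, Preadditive.comp_sub, Preadditive.add_comp,
          Preadditive.comp_add, Category.id_comp, Preadditive.neg_comp, Preadditive.comp_neg, limit.lift_π,
          Fan.mk_π_app, hhomfst, hhomsnd, dif_pos h, dif_neg h']
        simp [hhomfst, hhomsnd, hhomfst', hhomsnd', h, h', sub_eq_add_neg,
          Preadditive.neg_comp]
      · have h' : N ≤ j.1.down + 1 := by omega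
        simp only [hg, hA, hB, s1, t2, Category.assoc, prod.lift_fst, prod.lift_fst_assoc,
          Preadditive.sub_comp, Preadditive.comp_sub, Preadditive.add_comp,
          Preadditive.comp_add, Category.id_comp, Preadditive.neg_comp, Preadditive.comp_neg, limit.lift_π,
          Fan.mk_π_app, dif_neg h, dif_pos h']
        simp [hhomfst, hhomsnd, hhomfst', hhomsnd', h, h', sub_eq_add_neg,
          Preadditive.neg_comp]
    · apply Limits.Pi.hom_ext
      intro j
      simp only [hg, hC₂, s2, Category.assoc, prod.lift_snd, prod.lift_snd_assoc,
        Preadditive.sub_comp, Preadditive.comp_sub, Category.id_comp, limit.lift_π,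
        Fan.mk_π_app]
      simp [hhomsnd, hhomsnd', sub_eq_add_neg, Preadditive.neg_comp]
  have hblock : e.inv ≫ g ≫ e.hom =
      prod.lift (prod.fst ≫ A + prod.snd ≫ B) (prod.snd ≫ C₂) := by
    rw [hgeh, Iso.inv_hom_id_assoc]
  -- A is invertible
  have hAiso : IsIso A := ⟨uInv X d N, uInv_right X d N, uInv_left X d N⟩
  -- the unipotent change of basis v
  set v : (∏ᶜ f₁ X N) ⨯ (∏ᶜ f₂ X N) ⟶ (∏ᶜ f₁ X N) ⨯ (∏ᶜ f₂ X N) :=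
    prod.lift (prod.fst - prod.snd ≫ B ≫ uInv X d N) prod.snd with hv
  have hviso : IsIso v := by
    refine ⟨prod.lift (prod.fst + prod.snd ≫ B ≫ uInv X d N) prod.snd, ?_, ?_⟩ <;>
      apply Limits.prod.hom_ext <;>
        simp [hv, Preadditive.sub_comp, Preadditive.add_comp, Preadditive.comp_sub,
          Preadditive.comp_add]
  have hvg : v ≫ (e.inv ≫ g ≫ e.hom) = prod.map A C₂ := by
    rw [hblock]
    apply Limits.prod.hom_ext
    · simp only [hv, Category.assoc, prod.lift_fst, prod.map_fst,
        Preadditive.comp_add, prod.lift_fst_assoc, Preadditive.sub_comp, Category.assoc]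
      have : uInv X d N ≫ A = 𝟙 _ := uInv_left X d N
      rw [this]
      simp
    · simp [hv]
  -- transport the rotated triangle
  have hrot : (Triangle.mk φ g ψ).rotate ∈ distTriang C := rot_of_distTriang _ htriangle
  have hveinv : IsIso (v ≫ e.inv) := by infer_instance
  set Tb : Triangle C := Triangle.mk (prod.map A C₂) (e.inv ≫ ψ)
    ((-(shiftFunctor C (1 : ℤ)).map φ) ≫ (shiftFunctor C (1 : ℤ)).map (e.hom ≫ inv v)) with hTb
  have hTbdist : Tb ∈ distTriang C := by
    refine isomorphic_distinguished _ hrot _ ?_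
    refine Triangle.isoMk _ _ (@asIso _ _ _ _ v hviso ≪≫ e.symm) e.symm (Iso.refl _) ?_ ?_ ?_
    · show prod.map A C₂ ≫ e.inv = (v ≫ e.inv) ≫ g
      rw [← hvg]
      simp
    · show (e.inv ≫ ψ) ≫ 𝟙 _ = e.inv ≫ ψ
      simp
    · show ((-(shiftFunctor C (1 : ℤ)).map φ) ≫ (shiftFunctor C (1 : ℤ)).map (e.hom ≫ inv v)) ≫
          (shiftFunctor C (1 : ℤ)).map (v ≫ e.inv) = 𝟙 _ ≫ (-(shiftFunctor C (1 : ℤ)).map φ)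
      simp only [Preadditive.neg_comp, Category.id_comp, Category.assoc, ← Functor.map_comp,
        IsIso.inv_hom_id_assoc, Iso.hom_inv_id, Functor.map_id, Category.comp_id]
  -- the two factor triangles
  obtain ⟨Z, uZ, wZ, hTc⟩ := distinguished_cocone_triangle C₂
  have hTa : Triangle.mk A (0 : (∏ᶜ f₁ X N) ⟶ (0 : C)) 0 ∈ distTriang C := by
    refine isomorphic_distinguished _ (contractible_distinguished (∏ᶜ f₁ X N)) _ ?_
    refine Triangle.isoMk _ _ (Iso.refl _) (asIso A).symm (Iso.refl _) ?_ ?_ ?_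
    · dsimp; exact (IsIso.hom_inv_id A).trans (Category.id_comp _).symm
    · apply (isZero_zero C).eq_of_tgt
    · apply (isZero_zero C).eq_of_src
  obtain ⟨w, hTd⟩ := prod_triangle_distinguished
    (Triangle.mk A (0 : (∏ᶜ f₁ X N) ⟶ (0 : C)) 0) (Triangle.mk C₂ uZ wZ) hTa hTc
  -- compare third objects
  have hiso := isoTriangleOfIso₁₂ Tb _ hTbdist hTd (Iso.refl _) (Iso.refl _)
    (by show prod.map A C₂ ≫ 𝟙 _ = 𝟙 _ ≫ prod.map A C₂; rw [Category.comp_id, Category.id_comp])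
  have hH1 : (H⟦(1 : ℤ)⟧ : C) ≅ (0 : C) ⨯ Z := Triangle.π₃.mapIso hiso
  -- memberships
  have hP₂ : (∏ᶜ f₂ X N) ∈ S m :=
    hprod m _ (fun i => hnested _ _ (hN _ i.2) (hX i.1.down))
  have hZ : Z ∈ S m := (hS m).ext_mem _ hTc hP₂ hP₂
  have h0Z : ((0 : C) ⨯ Z) ∈ S m := by
    refine (hS m).iso_closed (X := Z) ?_ hZ
    refine ⟨prod.lift 0 (𝟙 Z), prod.snd, by simp, ?_⟩
    apply Limits.prod.hom_ext
    · apply (isZero_zero C).eq_of_tgt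
    · simp
  have hH1mem : (H⟦(1 : ℤ)⟧ : C) ∈ S m := (hS m).iso_closed hH1.symm h0Z
  have hHm : ((H⟦(1 : ℤ)⟧)⟦(-1 : ℤ)⟧ : C) ∈ S m := (hS m).shift_mem _ _ hH1mem
  exact (hS m).iso_closed ((shiftEquiv C (1 : ℤ)).unitIso.app H).symm hHm
end

section
/- Let T be a triangulated category admitting arbitrary coproducts and products. Let (S_j)_{j ≤ −1} be a decreasing family of strictly full triangulated subcategories of T (S_j ⊇ S_{j-1}), each closed under arbitrary coproducts and arbitrary products in T, with ∩_j S_j = {0}. Let (X_j)_{j ≤ −1} be a family of objects with X_j ∈ S_j for each j. Then the canonical morphism from the coproduct ⊕_{j ≤ −1} X_j to the product ∏_{j ≤ −1} X_j is an isomorphism. -/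
/-!
STATEMENT 7: for a decreasing family `(S_j)_{j ≤ -1}` of strictly full triangulated
subcategories closed under coproducts and products, with zero intersection, and
objects `X_j ∈ S_j`, the canonical morphism `⊕_{j ≤ -1} X_j → ∏_{j ≤ -1} X_j`
is an isomorphism.
-/

open CategoryTheory CategoryTheory.Limits CategoryTheory.Pretriangulated Opposite ZeroObject

universe v u

variable {C : Type u} [Category.{v} C] [Preadditive C] [HasZeroObject C]
  [HasShift C ℤ] [∀ n : ℤ, (shiftFunctor C n).Additive] [Pretriangulated C]
  [HasCoproducts.{v} C] [HasProducts.{v} C]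

/-- canonical map -/
noncomputable def canMap {ι : Type v} [DecidableEq ι] (f : ι → C) : ∐ f ⟶ ∏ᶜ f :=
  Sigma.desc (fun i => Pi.lift
      (fun j => if h : i = j then eqToHom (congrArg f h) else (0 : f i ⟶ f j)))

lemma canMap_isIso {ι : Type v} [DecidableEq ι] [Fintype ι] (f : ι → C) : IsIso (canMap f) := by
  have : canMap f = (biproduct.isoCoproduct f).inv ≫ (biproduct.isoProduct f).hom := by
    ext i j
    simp [canMap, biproduct.isoCoproduct_inv, biproduct.isoProduct_hom, biproduct.ι_π]
  rw [this]
  infer_instance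

noncomputable def piBoolIso (f : Bool → C) : ∏ᶜ f ≅ f true ⊞ f false where
  hom := biprod.lift (Pi.π _ true) (Pi.π _ false)
  inv := Pi.lift (fun b => Bool.rec (motive := fun b => (f true ⊞ f false ⟶ f b))
    biprod.snd biprod.fst b)
  hom_inv_id := by
    apply limit.hom_ext
    rintro ⟨(_|_)⟩ <;> simp
  inv_hom_id := by
    ext <;> simp

lemma exists_biprod_triangle (T₁ T₂ : Triangle C) (h₁ : T₁ ∈ distTriang C)
    (h₂ : T₂ ∈ distTriang C) :
    ∃ (g : T₁.obj₂ ⊞ T₂.obj₂ ⟶ T₁.obj₃ ⊞ T₂.obj₃)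
      (h : T₁.obj₃ ⊞ T₂.obj₃ ⟶ (T₁.obj₁ ⊞ T₂.obj₁)⟦(1:ℤ)⟧),
      Triangle.mk (biprod.map T₁.mor₁ T₂.mor₁) g h ∈ distTriang C := by
  let G : Bool → Triangle C := fun b => cond b T₁ T₂
  have hG : ∀ b, G b ∈ distTriang C := by rintro (_|_) <;> assumption
  have hP := productTriangle_distinguished G hG
  let P := productTriangle G
  let e₁ : ∏ᶜ (fun b => (G b).obj₁) ≅ T₁.obj₁ ⊞ T₂.obj₁ := piBoolIso _
  let e₂ : ∏ᶜ (fun b => (G b).obj₂) ≅ T₁.obj₂ ⊞ T₂.obj₂ := piBoolIso _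
  let e₃ : ∏ᶜ (fun b => (G b).obj₃) ≅ T₁.obj₃ ⊞ T₂.obj₃ := piBoolIso _
  refine ⟨e₂.inv ≫ P.mor₂ ≫ e₃.hom,
    e₃.inv ≫ P.mor₃ ≫ (shiftFunctor C (1:ℤ)).map e₁.hom, ?_⟩
  refine isomorphic_distinguished _ hP _ (Triangle.isoMk _ _ e₁.symm e₂.symm e₃.symm ?_ ?_ ?_)
  · dsimp [e₁, e₂, piBoolIso, P, productTriangle, G, Triangle.mk]
    apply limit.hom_ext
    rintro ⟨(_|_)⟩ <;>
      simp [e₁, e₂, piBoolIso, P, productTriangle, G]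
  · dsimp [P, productTriangle, Triangle.mk]
    simp
  · dsimp [P, productTriangle, Triangle.mk]
    simp only [Category.assoc, ← Functor.map_comp, Iso.hom_inv_id, Functor.map_id,
      Category.comp_id]
    simp [P, productTriangle]

section Split
variable {ι : Type v} (f : ι → C) (p : ι → Prop) [DecidablePred p]

noncomputable def coprodSplit :
    ∐ f ≅ (∐ fun i : {i // p i} => f i.1) ⊞ (∐ fun i : {i // ¬ p i} => f i.1) where
  hom := Sigma.desc fun i =>
    if h : p i then (Sigma.ι (fun i : {i // p i} => f i.1) ⟨i, h⟩) ≫ biprod.inl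
      else (Sigma.ι (fun i : {i // ¬ p i} => f i.1) ⟨i, h⟩) ≫ biprod.inr
  inv := biprod.desc (Sigma.desc fun i => Sigma.ι f i.1) (Sigma.desc fun i => Sigma.ι f i.1)
  hom_inv_id := by
    ext i
    by_cases h : p i <;> simp [h]
  inv_hom_id := by
    ext i <;> simp [i.2]

noncomputable def prodSplit :
    ∏ᶜ f ≅ (∏ᶜ fun i : {i // p i} => f i.1) ⊞ (∏ᶜ fun i : {i // ¬ p i} => f i.1) where
  hom := biprod.lift (Pi.lift fun i => Pi.π f i.1) (Pi.lift fun i => Pi.π f i.1)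
  inv := Pi.lift fun i =>
    if h : p i then biprod.fst ≫ Pi.π (fun i : {i // p i} => f i.1) ⟨i, h⟩
      else biprod.snd ≫ Pi.π (fun i : {i // ¬ p i} => f i.1) ⟨i, h⟩
  hom_inv_id := by
    ext i
    by_cases h : p i <;> simp [h]
  inv_hom_id := by
    ext i <;> simp [i.2]

end Split

lemma canMap_split {ι : Type v} [DecidableEq ι] (f : ι → C) (p : ι → Prop) [DecidablePred p] :
    canMap f ≫ (prodSplit f p).hom =
      (coprodSplit f p).hom ≫ biprod.map (canMap fun i : {i // p i} => f i.1)
        (canMap fun i : {i // ¬ p i} => f i.1) := by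
  apply colimit.hom_ext
  rintro ⟨i⟩
  simp only [Discrete.functor_obj_eq_as, Cofan.mk_ι_app]
  apply biprod.hom_ext
  · apply limit.hom_ext
    rintro ⟨j⟩
    by_cases h : p i
    · simp [canMap, prodSplit, coprodSplit, h]
      by_cases hij : i = (j : ι)
      · rw [dif_pos hij, dif_pos (Subtype.ext hij)]
      · rw [dif_neg hij, dif_neg (fun e => hij (congrArg Subtype.val e))]
    · simp [canMap, prodSplit, coprodSplit, h]
      intro e
      subst e
      exact absurd j.2 h
  · apply limit.hom_ext
    rintro ⟨j⟩
    by_cases h : p i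
    · simp [canMap, prodSplit, coprodSplit, h]
      intro e
      subst e
      exact absurd h j.2
    · simp [canMap, prodSplit, coprodSplit, h]
      by_cases hij : i = (j : ι)
      · rw [dif_pos hij, dif_pos (Subtype.ext hij)]
      · rw [dif_neg hij, dif_neg (fun e => hij (congrArg Subtype.val e))]

noncomputable def biprodZeroIso (Y : C) : Y ≅ Y ⊞ (0 : C) where
  hom := biprod.inl
  inv := biprod.fst
  hom_inv_id := by simp
  inv_hom_id := by
    apply biprod.hom_ext
    · simp
    · exact (isZero_zero C).eq_of_tgt _ _

theorem coproduct_to_product_iso_of_decreasing_membership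
    (S : ℤ → Set C) (hS : ∀ j, IsTriangulatedSub (S j))
    (hdec : ∀ j : ℤ, S (j - 1) ⊆ S j)
    (hcoprod : ∀ (m : ℤ) {ι : Type v} (f : ι → C), (∀ i, f i ∈ S m) → (∐ f) ∈ S m)
    (hprod : ∀ (m : ℤ) {ι : Type v} (f : ι → C), (∀ i, f i ∈ S m) → (∏ᶜ f) ∈ S m)
    (hinter : ∀ Z : C, (∀ m, Z ∈ S m) → IsZero Z)
    (X : ULift.{v} {j : ℤ // j ≤ -1} → C)
    (hX : ∀ i, X i ∈ S i.down.val) :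
    IsIso (Sigma.desc (fun i => Pi.lift
      (fun j => if h : i = j then eqToHom (congrArg X h) else (0 : X i ⟶ X j)))) := by
  show IsIso (canMap X)
  have mono : ∀ (j m : ℤ), j ≤ m → S j ⊆ S m := by
    intro j m hjm
    refine Int.le_induction (motive := fun n _ => S j ⊆ S n) (fun x hx => hx) ?_ m hjm
    intro n _ ih x hx
    have h2 : S ((n + 1) - 1) ⊆ S (n + 1) := hdec (n + 1)
    simp only [add_sub_cancel_right] at h2
    exact h2 (ih hx)
  obtain ⟨Z, g, h, hT⟩ := distinguished_cocone_triangle (canMap X)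
  suffices hZ : ∀ a : ℤ, Z ∈ S a by
    exact (Triangle.isZero₃_iff_isIso₁ _ hT).1 (hinter Z hZ)
  intro a
  set p : ULift.{v} {j : ℤ // j ≤ -1} → Prop := fun i => i.down.1 ≤ a with hp
  haveI : Finite {i // ¬ p i} := by
    haveI := (Set.finite_Icc (a + 1) (-1)).to_subtype
    have hmem : ∀ i : {i // ¬ p i}, i.1.down.1 ∈ Set.Icc (a + 1) (-1) := by
      intro i
      have h1 := i.1.down.2
      have h2 := i.2
      simp only [hp, not_le] at h2
      simp only [Set.mem_Icc]
      omega
    refine Finite.of_injective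
      (fun i => (⟨i.1.down.1, hmem i⟩ : Set.Icc (a + 1) (-1))) ?_
    rintro ⟨⟨⟨x, hx⟩⟩, hx2⟩ ⟨⟨⟨y, hy⟩⟩, hy2⟩ e
    simp only [Subtype.mk.injEq] at e
    subst e
    rfl
  haveI : Fintype {i // ¬ p i} := Fintype.ofFinite _
  set f₁ : {i // p i} → C := fun i => X i.1 with hf₁
  set f₂ : {i // ¬ p i} → C := fun i => X i.1 with hf₂
  haveI : IsIso (canMap f₂) := canMap_isIso f₂
  obtain ⟨Z₁, g₁, h₁, hT₁⟩ := distinguished_cocone_triangle (canMap f₁)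
  have hT₂ : Triangle.mk (canMap f₂) (0 : ∏ᶜ f₂ ⟶ (0 : C)) 0 ∈ distTriang C := by
    refine isomorphic_distinguished _ (contractible_distinguished (∏ᶜ f₂)) _ ?_
    exact Triangle.isoMk _ _ (asIso (canMap f₂) : ∐ f₂ ≅ ∏ᶜ f₂) (Iso.refl _) (Iso.refl _)
      (by dsimp [Triangle.mk]; rfl) (by dsimp [Triangle.mk]; exact (isZero_zero C).eq_of_tgt _ _)
      (by dsimp [Triangle.mk]; exact (isZero_zero C).eq_of_src _ _)
  obtain ⟨g', h', hT'⟩ := exists_biprod_triangle (Triangle.mk (canMap f₁) g₁ h₁)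
    (Triangle.mk (canMap f₂) (0 : ∏ᶜ f₂ ⟶ (0 : C)) 0) hT₁ hT₂
  have hT'' : Triangle.mk (canMap X) ((prodSplit X p).hom ≫ g')
      (h' ≫ (shiftFunctor C (1 : ℤ)).map (coprodSplit X p).inv) ∈ distTriang C := by
    refine isomorphic_distinguished _ hT' _ ?_
    refine Triangle.isoMk _ _ (coprodSplit X p) (prodSplit X p) (Iso.refl _)
      ?_ (by dsimp [Triangle.mk]; simp) ?_
    · exact canMap_split X p
    · dsimp [Triangle.mk]
      erw [Category.assoc, ← Functor.map_comp, Iso.inv_hom_id, Category.id_comp]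
      erw [CategoryTheory.Functor.map_id, Category.comp_id]
  have e := isoTriangleOfIso₁₂ _ _ hT hT'' (Iso.refl _) (Iso.refl _) (by dsimp [Triangle.mk]; simp)
  have eZ : Z ≅ Z₁ ⊞ (0 : C) := Triangle.π₃.mapIso e
  have hZ₁ : Z₁ ∈ S a := by
    refine (hS a).ext_mem _ hT₁ (hcoprod a f₁ ?_) (hprod a f₁ ?_)
    all_goals exact fun i => mono _ a i.2 (hX i.1)
  exact (hS a).iso_closed (((biprodZeroIso Z₁) ≪≫ eZ.symm)) hZ₁
end

section
/- Let p ≥ 5 be a prime and let G be the group with generators f_1, f_2, f_3, f_4, f_5 and relations: f_i^p = 1 for all i; f_5 is central; [f_2, f_1] = f_3; [f_3, f_1] = f_4; [f_4, f_1] = [f_3, f_2] = f_5; [f_4, f_2] = [f_4, f_3] = 1, where [g,h] = g⁻¹h⁻¹gh. Then G is a group of order p^5. -/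
/-!
STATEMENT 13: the group with presentation
⟨f₁,…,f₅ | fᵢᵖ = 1, f₅ central, [f₂,f₁]=f₃, [f₃,f₁]=f₄, [f₄,f₁]=[f₃,f₂]=f₅,
[f₄,f₂]=[f₄,f₃]=1⟩, where [g,h]=g⁻¹h⁻¹gh, has order p⁵ (p ≥ 5 prime).
Generators f₁,…,f₅ are indexed by 0,…,4 : Fin 5.
-/

/-- The commutator word `[g,h] = g⁻¹h⁻¹gh`. -/
def cmt (g h : FreeGroup (Fin 5)) : FreeGroup (Fin 5) := g⁻¹ * h⁻¹ * g * h

/-- The relations of the presentation. -/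
def paperRels (p : ℕ) : Set (FreeGroup (Fin 5)) :=
  (Set.range fun i : Fin 5 => FreeGroup.of i ^ p) ∪
  -- f₅ is central
  (Set.range fun i : Fin 5 => cmt (FreeGroup.of 4) (FreeGroup.of i)) ∪
  { cmt (FreeGroup.of 1) (FreeGroup.of 0) * (FreeGroup.of 2)⁻¹,  -- [f₂,f₁] = f₃
    cmt (FreeGroup.of 2) (FreeGroup.of 0) * (FreeGroup.of 3)⁻¹,  -- [f₃,f₁] = f₄
    cmt (FreeGroup.of 3) (FreeGroup.of 0) * (FreeGroup.of 4)⁻¹,  -- [f₄,f₁] = f₅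
    cmt (FreeGroup.of 2) (FreeGroup.of 1) * (FreeGroup.of 4)⁻¹,  -- [f₃,f₂] = f₅
    cmt (FreeGroup.of 3) (FreeGroup.of 1),                        -- [f₄,f₂] = 1
    cmt (FreeGroup.of 3) (FreeGroup.of 2) }                       -- [f₄,f₃] = 1

namespace St13

variable (p : ℕ)

/-- `k(k-1)/2` in `ZMod p`. -/
def T2 (k : ZMod p) : ZMod p := k * (k - 1) * (2 : ZMod p)⁻¹
/-- `k(k-1)(k-2)/6` in `ZMod p`. -/
def T3 (k : ZMod p) : ZMod p := k * (k - 1) * (k - 2) * (6 : ZMod p)⁻¹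

/-- Heisenberg-type group of order `p^4`. -/
@[ext] structure Hp where
  b : ZMod p
  c : ZMod p
  d : ZMod p
  e : ZMod p

namespace Hp

variable {p}

instance : Mul (Hp p) := ⟨fun x y => ⟨x.b + y.b, x.c + y.c, x.d + y.d, x.e + y.e + x.c * y.b⟩⟩
instance : One (Hp p) := ⟨⟨0, 0, 0, 0⟩⟩
instance : Inv (Hp p) := ⟨fun x => ⟨-x.b, -x.c, -x.d, x.c * x.b - x.e⟩⟩

@[simp] lemma mul_b (x y : Hp p) : (x * y).b = x.b + y.b := rfl
@[simp] lemma mul_c (x y : Hp p) : (x * y).c = x.c + y.c := rfl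
@[simp] lemma mul_d (x y : Hp p) : (x * y).d = x.d + y.d := rfl
@[simp] lemma mul_e (x y : Hp p) : (x * y).e = x.e + y.e + x.c * y.b := rfl
@[simp] lemma one_b : (1 : Hp p).b = 0 := rfl
@[simp] lemma one_c : (1 : Hp p).c = 0 := rfl
@[simp] lemma one_d : (1 : Hp p).d = 0 := rfl
@[simp] lemma one_e : (1 : Hp p).e = 0 := rfl
@[simp] lemma inv_b (x : Hp p) : (x⁻¹).b = -x.b := rfl
@[simp] lemma inv_c (x : Hp p) : (x⁻¹).c = -x.c := rfl
@[simp] lemma inv_d (x : Hp p) : (x⁻¹).d = -x.d := rfl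
@[simp] lemma inv_e (x : Hp p) : (x⁻¹).e = x.c * x.b - x.e := rfl

instance : Group (Hp p) where
  mul_assoc x y z := by ext <;> simp <;> ring
  one_mul x := by ext <;> simp
  mul_one x := by ext <;> simp
  inv_mul_cancel x := by ext <;> simp <;> ring

/-- The equivalence with a product type (for cardinality / finiteness). -/
def prodEquiv : Hp p ≃ (ZMod p × ZMod p × ZMod p × ZMod p) where
  toFun x := (x.b, x.c, x.d, x.e)
  invFun y := ⟨y.1, y.2.1, y.2.2.1, y.2.2.2⟩
  left_inv x := rfl
  right_inv y := rfl

instance [NeZero p] : Finite (Hp p) := Finite.of_equiv _ prodEquiv.symm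

end Hp

/-- The action used for the semidirect product. -/
def autFun (k : ZMod p) (x : Hp p) : Hp p :=
  ⟨x.b, x.c + k * x.b, x.d + k * x.c + T2 p k * x.b,
    x.e + k * x.d + T2 p k * x.c + T3 p k * x.b + k * T2 p x.b⟩

variable {p} [Fact p.Prime]

lemma T2_add (h2 : (2 : ZMod p) ≠ 0) (x y : ZMod p) :
    T2 p (x + y) = T2 p x + T2 p y + x * y := by
  unfold T2; field_simp; ring

lemma T3_add (h2 : (2 : ZMod p) ≠ 0) (h6 : (6 : ZMod p) ≠ 0) (x y : ZMod p) :
    T3 p (x + y) = T3 p x + T3 p y + x * T2 p y + T2 p x * y := by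
  unfold T3 T2; field_simp; ring

lemma autFun_mul (h2 : (2 : ZMod p) ≠ 0) (h6 : (6 : ZMod p) ≠ 0) (k : ZMod p) (x y : Hp p) :
    autFun p k (x * y) = autFun p k x * autFun p k y := by
  ext <;> simp only [autFun, Hp.mul_b, Hp.mul_c, Hp.mul_d, Hp.mul_e] <;>
    first
      | ring1
      | (rw [T2_add h2]; ring1)
      | (rw [T2_add h2, T3_add h2 h6]; ring1)
      | (rw [T3_add h2 h6, T2_add h2]; ring1)
      | (rw [T2_add h2, T2_add h2, T3_add h2 h6]; ring1)
      | (rw [T3_add h2 h6, T2_add h2, T2_add h2]; ring1)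

lemma autFun_comp (h2 : (2 : ZMod p) ≠ 0) (h6 : (6 : ZMod p) ≠ 0) (k k' : ZMod p) (x : Hp p) :
    autFun p k (autFun p k' x) = autFun p (k + k') x := by
  ext <;> simp only [autFun] <;>
    first
      | ring1
      | (rw [T2_add h2]; ring1)
      | (rw [T2_add h2, T3_add h2 h6]; ring1)
      | (rw [T3_add h2 h6, T2_add h2]; ring1)
      | (rw [T2_add h2, T2_add h2, T3_add h2 h6]; ring1)
      | (rw [T3_add h2 h6, T2_add h2, T2_add h2]; ring1)

lemma autFun_zero (x : Hp p) : autFun p 0 x = x := by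
  ext <;> simp [autFun, T2, T3]

/-- `autFun` as a `MulEquiv`. -/
def autE (h2 : (2 : ZMod p) ≠ 0) (h6 : (6 : ZMod p) ≠ 0) (k : ZMod p) : Hp p ≃* Hp p where
  toFun := autFun p k
  invFun := autFun p (-k)
  left_inv x := by rw [autFun_comp h2 h6, neg_add_cancel, autFun_zero]
  right_inv x := by rw [autFun_comp h2 h6, add_neg_cancel, autFun_zero]
  map_mul' := autFun_mul h2 h6 k

@[simp] lemma autE_apply (h2 : (2 : ZMod p) ≠ 0) (h6 : (6 : ZMod p) ≠ 0) (k : ZMod p) (x : Hp p) :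
    autE h2 h6 k x = autFun p k x := rfl

/-- The homomorphism `Multiplicative (ZMod p) →* MulAut (Hp p)`. -/
def Phi (h2 : (2 : ZMod p) ≠ 0) (h6 : (6 : ZMod p) ≠ 0) :
    Multiplicative (ZMod p) →* MulAut (Hp p) where
  toFun s := autE h2 h6 (-(Multiplicative.toAdd s))
  map_one' := MulEquiv.ext fun x => by
    show autFun p (-(Multiplicative.toAdd 1)) x = x
    rw [toAdd_one, neg_zero, autFun_zero]
  map_mul' s t := MulEquiv.ext fun x => by
    show autFun p (-(Multiplicative.toAdd (s * t))) x
        = autFun p (-(Multiplicative.toAdd s)) (autFun p (-(Multiplicative.toAdd t)) x)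
    rw [autFun_comp h2 h6, toAdd_mul]
    congr 1
    ring

variable (h2 : (2 : ZMod p) ≠ 0) (h6 : (6 : ZMod p) ≠ 0)

/-- The model group of order `p^5`. -/
abbrev Gm := SemidirectProduct (Hp p) (Multiplicative (ZMod p)) (Phi h2 h6)

def gmEquiv : Gm h2 h6 ≃ (Hp p × Multiplicative (ZMod p)) where
  toFun x := (x.left, x.right)
  invFun y := ⟨y.1, y.2⟩
  left_inv x := by cases x; rfl
  right_inv y := rfl



/-! ### basis elements and computations in the model -/

section Basis
variable {p : ℕ} [Fact p.Prime]

def m1 : Hp p := ⟨1, 0, 0, 0⟩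
def m2 : Hp p := ⟨0, 1, 0, 0⟩
def m3 : Hp p := ⟨0, 0, 1, 0⟩
def m4 : Hp p := ⟨0, 0, 0, 1⟩

lemma m1_pow (m : ℕ) : (m1 : Hp p) ^ m = ⟨(m : ZMod p), 0, 0, 0⟩ := by
  induction m with
  | zero => ext <;> simp
  | succ m ih => rw [pow_succ, ih]; ext <;> simp [m1] <;> push_cast <;> ring

lemma m2_pow (m : ℕ) : (m2 : Hp p) ^ m = ⟨0, (m : ZMod p), 0, 0⟩ := by
  induction m with
  | zero => ext <;> simp
  | succ m ih => rw [pow_succ, ih]; ext <;> simp [m2] <;> push_cast <;> ring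

lemma m3_pow (m : ℕ) : (m3 : Hp p) ^ m = ⟨0, 0, (m : ZMod p), 0⟩ := by
  induction m with
  | zero => ext <;> simp
  | succ m ih => rw [pow_succ, ih]; ext <;> simp [m3] <;> push_cast <;> ring

lemma m4_pow (m : ℕ) : (m4 : Hp p) ^ m = ⟨0, 0, 0, (m : ZMod p)⟩ := by
  induction m with
  | zero => ext <;> simp
  | succ m ih => rw [pow_succ, ih]; ext <;> simp [m4] <;> push_cast <;> ring

lemma hp_decomp (x : Hp p) :
    x = m1 ^ x.b.val * (m2 ^ x.c.val * (m3 ^ x.d.val * m4 ^ x.e.val)) := by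
  haveI : NeZero p := ⟨(Fact.out : p.Prime).ne_zero⟩
  rw [m1_pow, m2_pow, m3_pow, m4_pow]
  ext <;> simp [ZMod.natCast_val, ZMod.cast_id]

lemma T2_zero : T2 p 0 = 0 := by simp [T2]
lemma T3_zero : T3 p 0 = 0 := by simp [T3]
lemma T2_one : T2 p 1 = 0 := by simp [T2]
lemma T3_one : T3 p 1 = 0 := by simp [T3]

lemma T2_neg_one (h2 : (2 : ZMod p) ≠ 0) : T2 p (-1) = 1 := by
  have h : (-1 : ZMod p) * (-1 - 1) = 2 := by ring
  rw [T2, h, mul_inv_cancel₀ h2]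

lemma T3_neg_one (h2 : (2 : ZMod p) ≠ 0) (h6 : (6 : ZMod p) ≠ 0) : T3 p (-1) = -1 := by
  have h : (-1 : ZMod p) * (-1 - 1) * (-1 - 2) = -6 := by ring
  rw [T3, h, neg_mul, mul_inv_cancel₀ h6]

end Basis

/-! ### the generators of the model and the relations -/

section Gen
variable {p : ℕ} [Fact p.Prime] (h2 : (2 : ZMod p) ≠ 0) (h6 : (6 : ZMod p) ≠ 0)

open SemidirectProduct Multiplicative

def t0 : Multiplicative (ZMod p) := Multiplicative.ofAdd 1

lemma t0_pow (m : ℕ) : (t0 : Multiplicative (ZMod p)) ^ m = Multiplicative.ofAdd (m : ZMod p) := by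
  rw [t0, ← ofAdd_nsmul, nsmul_eq_mul, mul_one]

def Fgen : Fin 5 → Gm h2 h6 := fun i =>
  match i with
  | 0 => inr t0
  | 1 => inl m1
  | 2 => inl m2
  | 3 => inl m3
  | 4 => inl m4

lemma Phi_t0 (x : Hp p) : Phi h2 h6 t0 x = autFun p (-1) x := rfl

lemma M10 : (inl m1 : Gm h2 h6) * inr t0 = inr t0 * (inl m1 * inl m2) := by
  rw [← map_mul inl m1 m2]
  ext : 1
  · simp only [mul_left, left_inl, right_inl, left_inr, right_inr, map_one, MulAut.one_apply, mul_one, one_mul, Phi_t0]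
    ext <;> simp [m1, m2, autFun, T2_neg_one h2, T3_neg_one h2 h6, T2_one, T3_one, T2_zero, T3_zero] <;> try ring1
  · simp only [mul_right, right_inl, right_inr, mul_one, one_mul]

lemma M20 : (inl m2 : Gm h2 h6) * inr t0 = inr t0 * (inl m2 * inl m3) := by
  rw [← map_mul inl m2 m3]
  ext : 1
  · simp only [mul_left, left_inl, right_inl, left_inr, right_inr, map_one, MulAut.one_apply, mul_one, one_mul, Phi_t0]
    ext <;> simp [m2, m3, autFun, T2_neg_one h2, T3_neg_one h2 h6, T2_one, T3_one, T2_zero, T3_zero] <;> try ring1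
  · simp only [mul_right, right_inl, right_inr, mul_one, one_mul]

lemma M30 : (inl m3 : Gm h2 h6) * inr t0 = inr t0 * (inl m3 * inl m4) := by
  rw [← map_mul inl m3 m4]
  ext : 1
  · simp only [mul_left, left_inl, right_inl, left_inr, right_inr, map_one, MulAut.one_apply, mul_one, one_mul, Phi_t0]
    ext <;> simp [m3, m4, autFun, T2_neg_one h2, T3_neg_one h2 h6, T2_one, T3_one, T2_zero, T3_zero] <;> try ring1
  · simp only [mul_right, right_inl, right_inr, mul_one, one_mul]

lemma M21 : (inl m2 : Gm h2 h6) * inl m1 = inl m1 * (inl m2 * inl m4) := by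
  rw [← map_mul inl, ← map_mul inl, ← map_mul inl]
  congr 1
  ext <;> simp [m1, m2, m4]

lemma M31 : (inl m3 : Gm h2 h6) * inl m1 = inl m1 * inl m3 := by
  rw [← map_mul inl, ← map_mul inl]; congr 1; ext <;> simp [m1, m3]

lemma M32 : (inl m3 : Gm h2 h6) * inl m2 = inl m2 * inl m3 := by
  rw [← map_mul inl, ← map_mul inl]; congr 1; ext <;> simp [m2, m3]

lemma M4central : ∀ i, (inl m4 : Gm h2 h6) * Fgen h2 h6 i = Fgen h2 h6 i * inl m4 := by
  intro i
  fin_cases i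
  · show (inl m4 : Gm h2 h6) * inr t0 = inr t0 * inl m4
    ext : 1
    · simp only [mul_left, left_inl, right_inl, left_inr, right_inr, map_one, MulAut.one_apply, mul_one, one_mul, Phi_t0]
      ext <;> simp [m4, autFun, T2_zero, T3_zero]
    · simp only [mul_right, right_inl, right_inr, mul_one, one_mul]
  · show (inl m4 : Gm h2 h6) * inl m1 = inl m1 * inl m4
    rw [← map_mul inl, ← map_mul inl]; congr 1; ext <;> simp [m1, m4]
  · show (inl m4 : Gm h2 h6) * inl m2 = inl m2 * inl m4
    rw [← map_mul inl, ← map_mul inl]; congr 1; ext <;> simp [m2, m4]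
  · show (inl m4 : Gm h2 h6) * inl m3 = inl m3 * inl m4
    rw [← map_mul inl, ← map_mul inl]; congr 1; ext <;> simp [m3, m4]
  · show (inl m4 : Gm h2 h6) * inl m4 = inl m4 * inl m4
    rfl

lemma Fgen_pow_p : ∀ i, Fgen h2 h6 i ^ p = 1 := by
  intro i
  fin_cases i
  · show (inr (t0 : Multiplicative (ZMod p))) ^ p = 1
    rw [← map_pow, t0_pow, ZMod.natCast_self]
    show (inr (Multiplicative.ofAdd (0 : ZMod p)) : Gm h2 h6) = 1
    rw [ofAdd_zero, map_one]
  · show (inl (m1 : Hp p)) ^ p = 1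
    rw [← map_pow, m1_pow, ZMod.natCast_self]
    exact map_one inl
  · show (inl (m2 : Hp p)) ^ p = 1
    rw [← map_pow, m2_pow, ZMod.natCast_self]
    exact map_one inl
  · show (inl (m3 : Hp p)) ^ p = 1
    rw [← map_pow, m3_pow, ZMod.natCast_self]
    exact map_one inl
  · show (inl (m4 : Hp p)) ^ p = 1
    rw [← map_pow, m4_pow, ZMod.natCast_self]
    exact map_one inl

end Gen


section GroupHelpers
variable {G : Type*} [Group G]

lemma rel_of_eq {g h k : G} (H : g * h = h * (g * k)) : g⁻¹ * h⁻¹ * g * h * k⁻¹ = 1 := by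
  have h1 : g⁻¹ * h⁻¹ * g * h * k⁻¹ = g⁻¹ * (h⁻¹ * (g * h)) * k⁻¹ := by group
  rw [h1, H]; group

lemma rel_of_comm {g h : G} (H : g * h = h * g) : g⁻¹ * h⁻¹ * g * h = 1 := by
  have h1 : g⁻¹ * h⁻¹ * g * h = g⁻¹ * (h⁻¹ * (g * h)) := by group
  rw [h1, H]; group

lemma eq_of_rel {g h k : G} (H : g⁻¹ * h⁻¹ * g * h * k⁻¹ = 1) : g * h = h * (g * k) := by
  have hk : g⁻¹ * h⁻¹ * g * h = k := mul_inv_eq_one.mp H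
  rw [← hk]; group

lemma comm_of_rel {g h : G} (H : g⁻¹ * h⁻¹ * g * h = 1) : g * h = h * g := by
  have := congrArg (fun z => h * g * z) H
  simpa [mul_assoc] using this

lemma pow_congr_mod {x : G} {q : ℕ} (hx : x ^ q = 1) {m n : ℕ}
    (h : (m : ZMod q) = (n : ZMod q)) : x ^ m = x ^ n := by
  have hmn : m % q = n % q := by rwa [ZMod.natCast_eq_natCast_iff'] at h
  conv_lhs => rw [← Nat.div_add_mod m q]
  conv_rhs => rw [← Nat.div_add_mod n q]
  rw [pow_add, pow_add, pow_mul, pow_mul, hx, one_pow, one_pow, one_mul, one_mul, hmn]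

lemma pow_pred_eq_inv {x : G} {q : ℕ} (hq : q ≠ 0) (hx : x ^ q = 1) : x ^ (q - 1) = x⁻¹ := by
  apply eq_inv_of_mul_eq_one_left
  rw [← pow_succ, Nat.sub_add_cancel (Nat.one_le_iff_ne_zero.mpr hq), hx]

end GroupHelpers


variable {G : Type*} [Group G]

/-- elementary: pull `B` through `C^m`. -/
lemma stepCB {B C E : G} (hCB : C * B = B * (C * E)) (cEC : Commute E C) :
    ∀ m : ℕ, C ^ m * B = B * (C ^ m * E ^ m) := by
  intro m
  induction m with
  | zero => simp
  | succ m ih =>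
    have h1 : E * (C ^ m * E ^ m) = C ^ m * E ^ (m + 1) := by
      rw [← mul_assoc, (cEC.pow_right m).eq, mul_assoc, ← pow_succ']
    calc C ^ (m + 1) * B = C * (C ^ m * B) := by rw [pow_succ', mul_assoc]
      _ = C * (B * (C ^ m * E ^ m)) := by rw [ih]
      _ = (C * B) * (C ^ m * E ^ m) := by rw [mul_assoc]
      _ = B * (C * (E * (C ^ m * E ^ m))) := by rw [hCB]; group
      _ = B * (C * (C ^ m * E ^ (m + 1))) := by rw [h1]
      _ = B * (C ^ (m + 1) * E ^ (m + 1)) := by rw [← mul_assoc C, ← pow_succ']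

lemma powCB {B C E : G} (hCB : C * B = B * (C * E)) (cEB : Commute E B) (cEC : Commute E C) :
    ∀ m n : ℕ, C ^ m * B ^ n = B ^ n * (C ^ m * E ^ (m * n)) := by
  intro m n
  induction n with
  | zero => simp
  | succ n ih =>
    calc C ^ m * B ^ (n + 1) = (C ^ m * B ^ n) * B := by rw [pow_succ, mul_assoc]
      _ = (B ^ n * (C ^ m * E ^ (m * n))) * B := by rw [ih]
      _ = B ^ n * (C ^ m * (E ^ (m * n) * B)) := by rw [mul_assoc, mul_assoc]
      _ = B ^ n * (C ^ m * (B * E ^ (m * n))) := by rw [(cEB.pow_left (m * n)).eq]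
      _ = B ^ n * ((C ^ m * B) * E ^ (m * n)) := by group
      _ = B ^ n * ((B * (C ^ m * E ^ m)) * E ^ (m * n)) := by rw [stepCB hCB cEC]
      _ = B ^ (n + 1) * (C ^ m * (E ^ m * E ^ (m * n))) := by
            rw [pow_succ]
            group
      _ = B ^ (n + 1) * (C ^ m * E ^ (m * (n + 1))) := by
            rw [← pow_add]
            ring_nf

section Assemble
variable (B C D E : G)
variable (hCB : C * B = B * (C * E))
variable (cDB : Commute D B) (cDC : Commute D C)
variable (cEB : Commute E B) (cEC : Commute E C) (cED : Commute E D)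

include hCB cDB cDC cEB cEC cED in
lemma assemble (b1 c1 d1 e1 b2 c2 d2 e2 : ℕ) :
    (B ^ b1 * (C ^ c1 * (D ^ d1 * E ^ e1))) * (B ^ b2 * (C ^ c2 * (D ^ d2 * E ^ e2)))
      = B ^ (b1 + b2) * (C ^ (c1 + c2) * (D ^ (d1 + d2) * E ^ (e1 + e2 + c1 * b2))) := by
  have merge : ∀ (x : G) (m n : ℕ) (t : G), x ^ m * (x ^ n * t) = x ^ (m + n) * t := by
    intro x m n t; rw [← mul_assoc, ← pow_add]
  have merge2 : ∀ (x : G) (m n : ℕ), x ^ m * x ^ n = x ^ (m + n) := fun x m n => (pow_add x m n).symm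
  have sCB : ∀ m n : ℕ, ∀ t : G, C ^ m * (B ^ n * t) = B ^ n * (C ^ m * (E ^ (m * n) * t)) := by
    intro m n t
    rw [← mul_assoc, powCB hCB cEB cEC, mul_assoc, mul_assoc]
  have sCB' := powCB hCB cEB cEC
  have sDB : ∀ m n : ℕ, ∀ t : G, D ^ m * (B ^ n * t) = B ^ n * (D ^ m * t) := by
    intro m n t; rw [← mul_assoc, (cDB.symm.pow_pow n m).eq.symm, mul_assoc]
  have sDB' : ∀ m n : ℕ, D ^ m * B ^ n = B ^ n * D ^ m := fun m n => (cDB.pow_pow m n).eq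
  have sDC : ∀ m n : ℕ, ∀ t : G, D ^ m * (C ^ n * t) = C ^ n * (D ^ m * t) := by
    intro m n t; rw [← mul_assoc, (cDC.pow_pow m n).eq, mul_assoc]
  have sDC' : ∀ m n : ℕ, D ^ m * C ^ n = C ^ n * D ^ m := fun m n => (cDC.pow_pow m n).eq
  have sEB : ∀ m n : ℕ, ∀ t : G, E ^ m * (B ^ n * t) = B ^ n * (E ^ m * t) := by
    intro m n t; rw [← mul_assoc, (cEB.pow_pow m n).eq, mul_assoc]
  have sEB' : ∀ m n : ℕ, E ^ m * B ^ n = B ^ n * E ^ m := fun m n => (cEB.pow_pow m n).eq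
  have sEC : ∀ m n : ℕ, ∀ t : G, E ^ m * (C ^ n * t) = C ^ n * (E ^ m * t) := by
    intro m n t; rw [← mul_assoc, (cEC.pow_pow m n).eq, mul_assoc]
  have sEC' : ∀ m n : ℕ, E ^ m * C ^ n = C ^ n * E ^ m := fun m n => (cEC.pow_pow m n).eq
  have sED : ∀ m n : ℕ, ∀ t : G, E ^ m * (D ^ n * t) = D ^ n * (E ^ m * t) := by
    intro m n t; rw [← mul_assoc, (cED.pow_pow m n).eq, mul_assoc]
  have sED' : ∀ m n : ℕ, E ^ m * D ^ n = D ^ n * E ^ m := fun m n => (cED.pow_pow m n).eq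
  simp only [mul_assoc, sCB, sCB', sDB, sDB', sDC, sDC', sEB, sEB', sEC, sEC', sED, sED',
    merge, merge2, Nat.add_assoc, Nat.add_comm, Nat.add_left_comm, Nat.mul_comm]

end Assemble

/-! ### normal forms in an arbitrary group with our relations -/

section NF
variable {G : Type*} [Group G] {p : ℕ} [Fact p.Prime]
variable (B C D E : G)

/-- normal form map `Hp p → G`. -/
def nf (x : Hp p) : G := B ^ x.b.val * (C ^ x.c.val * (D ^ x.d.val * E ^ x.e.val))

variable {B C D E}
variable (hB : B ^ p = 1) (hC : C ^ p = 1) (hD : D ^ p = 1) (hE : E ^ p = 1)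
variable (hCB : C * B = B * (C * E))
variable (cDB : Commute D B) (cDC : Commute D C)
variable (cEB : Commute E B) (cEC : Commute E C) (cED : Commute E D)

include hB hC hD hE hCB cDB cDC cEB cEC cED in
lemma nf_mul (x y : Hp p) : nf B C D E (x * y) = nf B C D E x * nf B C D E y := by
  haveI : NeZero p := ⟨(Fact.out : p.Prime).ne_zero⟩
  rw [nf, nf, nf, assemble B C D E hCB cDB cDC cEB cEC cED]
  rw [pow_congr_mod hB (by push_cast [ZMod.natCast_val, ZMod.cast_id]; rfl :
        (((x * y).b.val : ℕ) : ZMod p) = ((x.b.val + y.b.val : ℕ) : ZMod p)),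
      pow_congr_mod hC (by push_cast [ZMod.natCast_val, ZMod.cast_id]; rfl :
        (((x * y).c.val : ℕ) : ZMod p) = ((x.c.val + y.c.val : ℕ) : ZMod p)),
      pow_congr_mod hD (by push_cast [ZMod.natCast_val, ZMod.cast_id]; rfl :
        (((x * y).d.val : ℕ) : ZMod p) = ((x.d.val + y.d.val : ℕ) : ZMod p)),
      pow_congr_mod hE (by push_cast [ZMod.natCast_val, ZMod.cast_id]; rfl :
        (((x * y).e.val : ℕ) : ZMod p) = ((x.e.val + y.e.val + x.c.val * y.b.val : ℕ) : ZMod p))]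

/-- normal form as a homomorphism. -/
def nfHom : Hp p →* G :=
  MonoidHom.mk' (nf B C D E) (nf_mul hB hC hD hE hCB cDB cDC cEB cEC cED)

lemma nfHom_apply (x : Hp p) :
    nfHom hB hC hD hE hCB cDB cDC cEB cEC cED x
      = B ^ x.b.val * (C ^ x.c.val * (D ^ x.d.val * E ^ x.e.val)) := rfl

end NF

end St13

open St13 SemidirectProduct Multiplicative

theorem presented_group_has_order_p_pow_five
    (p : ℕ) (hp : p.Prime) (hp5 : 5 ≤ p) :
    Nat.card (PresentedGroup (paperRels p)) = p ^ 5 := by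
  classical
  haveI hfact : Fact p.Prime := ⟨hp⟩
  haveI : NeZero p := ⟨hp.ne_zero⟩
  haveI : Fact (1 < p) := ⟨hp.one_lt⟩
  have h2 : (2 : ZMod p) ≠ 0 := by
    intro h
    have h' : ((2 : ℕ) : ZMod p) = 0 := by exact_mod_cast h
    have hd := (ZMod.natCast_eq_zero_iff 2 p).mp h'
    have := Nat.le_of_dvd (by norm_num) hd
    omega
  have h6 : (6 : ZMod p) ≠ 0 := by
    intro h
    have h' : ((6 : ℕ) : ZMod p) = 0 := by exact_mod_cast h
    have hd := (ZMod.natCast_eq_zero_iff 6 p).mp h'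
    have hle := Nat.le_of_dvd (by norm_num) hd
    interval_cases p
    · exact absurd hd (by decide)
    · exact absurd hp (by decide)
  -- cardinality of the model
  have cardGm : Nat.card (Gm h2 h6) = p ^ 5 := by
    rw [Nat.card_congr (gmEquiv h2 h6), Nat.card_prod,
      Nat.card_congr (Hp.prodEquiv (p := p)), Nat.card_prod, Nat.card_prod, Nat.card_prod,
      Nat.card_congr (Multiplicative.toAdd (α := ZMod p)), Nat.card_zmod]
    ring
  -- the presented group and its generators
  set PG := PresentedGroup (paperRels p) with hPGdef
  let π : FreeGroup (Fin 5) →* PG := QuotientGroup.mk' (Subgroup.normalClosure (paperRels p))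
  have hπ : ∀ r ∈ paperRels p, π r = 1 := fun r hr =>
    (QuotientGroup.eq_one_iff r).mpr (Subgroup.subset_normalClosure hr)
  let A : PG := PresentedGroup.of 0
  let B : PG := PresentedGroup.of 1
  let C : PG := PresentedGroup.of 2
  let D : PG := PresentedGroup.of 3
  let E : PG := PresentedGroup.of 4
  -- memberships
  have memPow : ∀ i : Fin 5, FreeGroup.of i ^ p ∈ paperRels p := fun i =>
    Set.mem_union_left _ (Set.mem_union_left _ ⟨i, rfl⟩)
  have memCen : ∀ i : Fin 5, cmt (FreeGroup.of 4) (FreeGroup.of i) ∈ paperRels p := fun i =>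
    Set.mem_union_left _ (Set.mem_union_right _ ⟨i, rfl⟩)
  have mem10 : cmt (FreeGroup.of 1) (FreeGroup.of 0) * (FreeGroup.of 2)⁻¹ ∈ paperRels p :=
    Set.mem_union_right _ (Set.mem_insert _ _)
  have mem20 : cmt (FreeGroup.of 2) (FreeGroup.of 0) * (FreeGroup.of 3)⁻¹ ∈ paperRels p :=
    Set.mem_union_right _ (Set.mem_insert_of_mem _ (Set.mem_insert _ _))
  have mem30 : cmt (FreeGroup.of 3) (FreeGroup.of 0) * (FreeGroup.of 4)⁻¹ ∈ paperRels p :=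
    Set.mem_union_right _ (Set.mem_insert_of_mem _ (Set.mem_insert_of_mem _ (Set.mem_insert _ _)))
  have mem21 : cmt (FreeGroup.of 2) (FreeGroup.of 1) * (FreeGroup.of 4)⁻¹ ∈ paperRels p :=
    Set.mem_union_right _ (Set.mem_insert_of_mem _ (Set.mem_insert_of_mem _
      (Set.mem_insert_of_mem _ (Set.mem_insert _ _))))
  have mem31 : cmt (FreeGroup.of 3) (FreeGroup.of 1) ∈ paperRels p :=
    Set.mem_union_right _ (Set.mem_insert_of_mem _ (Set.mem_insert_of_mem _
      (Set.mem_insert_of_mem _ (Set.mem_insert_of_mem _ (Set.mem_insert _ _)))))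
  have mem32 : cmt (FreeGroup.of 3) (FreeGroup.of 2) ∈ paperRels p :=
    Set.mem_union_right _ (Set.mem_insert_of_mem _ (Set.mem_insert_of_mem _
      (Set.mem_insert_of_mem _ (Set.mem_insert_of_mem _ (Set.mem_insert_of_mem _ rfl)))))
  -- relations in PG
  have hordA : A ^ p = 1 := by have := hπ _ (memPow 0); rwa [map_pow] at this
  have hordB : B ^ p = 1 := by have := hπ _ (memPow 1); rwa [map_pow] at this
  have hordC : C ^ p = 1 := by have := hπ _ (memPow 2); rwa [map_pow] at this
  have hordD : D ^ p = 1 := by have := hπ _ (memPow 3); rwa [map_pow] at this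
  have hordE : E ^ p = 1 := by have := hπ _ (memPow 4); rwa [map_pow] at this
  have e10 : B * A = A * (B * C) := by
    have := hπ _ mem10; simp only [cmt, map_mul, map_inv] at this; exact St13.eq_of_rel this
  have e20 : C * A = A * (C * D) := by
    have := hπ _ mem20; simp only [cmt, map_mul, map_inv] at this; exact St13.eq_of_rel this
  have e30 : D * A = A * (D * E) := by
    have := hπ _ mem30; simp only [cmt, map_mul, map_inv] at this; exact St13.eq_of_rel this
  have e21 : C * B = B * (C * E) := by
    have := hπ _ mem21; simp only [cmt, map_mul, map_inv] at this; exact St13.eq_of_rel this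
  have c31 : D * B = B * D := by
    have := hπ _ mem31; simp only [cmt, map_mul, map_inv] at this; exact St13.comm_of_rel this
  have c32 : D * C = C * D := by
    have := hπ _ mem32; simp only [cmt, map_mul, map_inv] at this; exact St13.comm_of_rel this
  have cenE : ∀ i : Fin 5, E * π (FreeGroup.of i) = π (FreeGroup.of i) * E := by
    intro i
    have := hπ _ (memCen i); simp only [cmt, map_mul, map_inv] at this
    exact St13.comm_of_rel this
  have cEA : E * A = A * E := cenE 0
  have cEB' : E * B = B * E := cenE 1
  have cEC' : E * C = C * E := cenE 2
  have cED' : E * D = D * E := cenE 3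
  have cDB : Commute D B := c31
  have cDC : Commute D C := c32
  have cEB : Commute E B := cEB'
  have cEC : Commute E C := cEC'
  have cED : Commute E D := cED'
  -- the two homomorphisms into PG
  let f1 : Hp p →* PG := nfHom hordB hordC hordD hordE e21 cDB cDC cEB cEC cED
  let f2 : Multiplicative (ZMod p) →* PG := MonoidHom.mk'
    (fun s => A ^ (Multiplicative.toAdd s).val)
    (by
      intro s t
      show A ^ (Multiplicative.toAdd (s * t)).val = _
      rw [← pow_add]
      exact pow_congr_mod hordA
        (by push_cast [ZMod.natCast_val, ZMod.cast_id, toAdd_mul]; rfl))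
  have fval : ∀ x : Hp p,
      f1 x = B ^ x.b.val * (C ^ x.c.val * (D ^ x.d.val * E ^ x.e.val)) := fun x => rfl
  have fm1 : f1 m1 = B := by
    rw [fval]; show B ^ (1 : ZMod p).val * (C ^ (0 : ZMod p).val * (D ^ (0 : ZMod p).val * E ^ (0 : ZMod p).val)) = B
    simp [ZMod.val_one, ZMod.val_zero]
  have fm2 : f1 m2 = C := by
    rw [fval]; show B ^ (0 : ZMod p).val * (C ^ (1 : ZMod p).val * (D ^ (0 : ZMod p).val * E ^ (0 : ZMod p).val)) = C
    simp [ZMod.val_one, ZMod.val_zero]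
  have fm3 : f1 m3 = D := by
    rw [fval]; show B ^ (0 : ZMod p).val * (C ^ (0 : ZMod p).val * (D ^ (1 : ZMod p).val * E ^ (0 : ZMod p).val)) = D
    simp [ZMod.val_one, ZMod.val_zero]
  have fm4 : f1 m4 = E := by
    rw [fval]; show B ^ (0 : ZMod p).val * (C ^ (0 : ZMod p).val * (D ^ (0 : ZMod p).val * E ^ (1 : ZMod p).val)) = E
    simp [ZMod.val_one, ZMod.val_zero]
  have conj_form : ∀ {x y : PG}, x * A = A * y → A⁻¹ * x * A = y := by
    intro x y h; rw [mul_assoc, h, ← mul_assoc, inv_mul_cancel, one_mul]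
  -- conjugation compatibility, on generators first
  have keymul : ∀ x y : Hp p,
      f1 (autFun p 1 x) = A⁻¹ * f1 x * A → f1 (autFun p 1 y) = A⁻¹ * f1 y * A →
      f1 (autFun p 1 (x * y)) = A⁻¹ * f1 (x * y) * A := by
    intro x y hx hy
    rw [autFun_mul h2 h6, map_mul, hx, hy, map_mul]
    group
  have key1 : f1 (autFun p 1 1) = A⁻¹ * f1 1 * A := by
    have h : autFun p 1 (1 : Hp p) = 1 := by ext <;> simp [autFun, T2_zero, T3_zero]
    rw [h, map_one]; group
  have keypow : ∀ (g : Hp p), f1 (autFun p 1 g) = A⁻¹ * f1 g * A → ∀ m : ℕ,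
      f1 (autFun p 1 (g ^ m)) = A⁻¹ * f1 (g ^ m) * A := by
    intro g hg m
    induction m with
    | zero => simpa using key1
    | succ m ih => rw [pow_succ]; exact keymul _ _ ih hg
  have keym1 : f1 (autFun p 1 m1) = A⁻¹ * f1 m1 * A := by
    have h : autFun p 1 (m1 : Hp p) = m1 * m2 := by
      ext <;> simp [autFun, m1, m2, T2_one, T3_one, T2_zero, T3_zero]
    rw [h, map_mul, fm1, fm2]
    exact (conj_form e10).symm
  have keym2 : f1 (autFun p 1 m2) = A⁻¹ * f1 m2 * A := by
    have h : autFun p 1 (m2 : Hp p) = m2 * m3 := by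
      ext <;> simp [autFun, m2, m3, T2_one, T3_one, T2_zero, T3_zero]
    rw [h, map_mul, fm2, fm3]
    exact (conj_form e20).symm
  have keym3 : f1 (autFun p 1 m3) = A⁻¹ * f1 m3 * A := by
    have h : autFun p 1 (m3 : Hp p) = m3 * m4 := by
      ext <;> simp [autFun, m3, m4, T2_one, T3_one, T2_zero, T3_zero]
    rw [h, map_mul, fm3, fm4]
    exact (conj_form e30).symm
  have keym4 : f1 (autFun p 1 m4) = A⁻¹ * f1 m4 * A := by
    have h : autFun p 1 (m4 : Hp p) = m4 := by
      ext <;> simp [autFun, m4, T2_one, T3_one, T2_zero, T3_zero]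
    rw [h, fm4]
    exact (conj_form cEA).symm
  have key : ∀ n : Hp p, f1 (autFun p 1 n) = A⁻¹ * f1 n * A := by
    intro n
    rw [hp_decomp n]
    exact keymul _ _ (keypow _ keym1 _) (keymul _ _ (keypow _ keym2 _)
      (keymul _ _ (keypow _ keym3 _) (keypow _ keym4 _)))
  -- extend to the whole acting group
  have Ps0 : ∀ n : Hp p, f1 (Phi h2 h6 (Multiplicative.ofAdd (-1 : ZMod p)) n)
      = f2 (Multiplicative.ofAdd (-1 : ZMod p)) * f1 n
        * (f2 (Multiplicative.ofAdd (-1 : ZMod p)))⁻¹ := by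
    intro n
    have hphi : Phi h2 h6 (Multiplicative.ofAdd (-1 : ZMod p)) n = autFun p 1 n := by
      show autFun p (-(Multiplicative.toAdd (Multiplicative.ofAdd (-1 : ZMod p)))) n = _
      rw [toAdd_ofAdd, neg_neg]
    have hf2 : f2 (Multiplicative.ofAdd (-1 : ZMod p)) = A⁻¹ := by
      show A ^ (Multiplicative.toAdd (Multiplicative.ofAdd (-1 : ZMod p))).val = A⁻¹
      rw [toAdd_ofAdd]
      rw [pow_congr_mod hordA (show (((-1 : ZMod p).val : ℕ) : ZMod p) = ((p - 1 : ℕ) : ZMod p) by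
        rw [ZMod.natCast_val, ZMod.cast_id, Nat.cast_sub hp.one_le, ZMod.natCast_self,
          Nat.cast_one, zero_sub])]
      exact pow_pred_eq_inv hp.ne_zero hordA
    rw [hphi, key n, hf2, inv_inv]
  have P1 : ∀ n : Hp p, f1 (Phi h2 h6 1 n) = f2 1 * f1 n * (f2 1)⁻¹ := by
    intro n
    rw [map_one, map_one]
    simp
  have Pmul : ∀ s t : Multiplicative (ZMod p),
      (∀ n, f1 (Phi h2 h6 s n) = f2 s * f1 n * (f2 s)⁻¹) →
      (∀ n, f1 (Phi h2 h6 t n) = f2 t * f1 n * (f2 t)⁻¹) →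
      ∀ n, f1 (Phi h2 h6 (s * t) n) = f2 (s * t) * f1 n * (f2 (s * t))⁻¹ := by
    intro s t hs ht n
    rw [map_mul (Phi h2 h6), MulAut.mul_apply, hs, ht, map_mul f2]
    group
  have Pall : ∀ s : Multiplicative (ZMod p), ∀ n,
      f1 (Phi h2 h6 s n) = f2 s * f1 n * (f2 s)⁻¹ := by
    have Ppow : ∀ m : ℕ, ∀ n,
        f1 (Phi h2 h6 ((Multiplicative.ofAdd (-1 : ZMod p)) ^ m) n)
          = f2 ((Multiplicative.ofAdd (-1 : ZMod p)) ^ m) * f1 n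
            * (f2 ((Multiplicative.ofAdd (-1 : ZMod p)) ^ m))⁻¹ := by
      intro m
      induction m with
      | zero => simpa using P1
      | succ m ih => rw [pow_succ]; exact Pmul _ _ ih Ps0
    intro s
    have hs : s = (Multiplicative.ofAdd (-1 : ZMod p)) ^ ((-(Multiplicative.toAdd s)).val) := by
      rw [← ofAdd_nsmul]
      conv_lhs => rw [← ofAdd_toAdd s]
      congr 1
      rw [nsmul_eq_mul, ZMod.natCast_val, ZMod.cast_id, mul_neg_one, neg_neg]
    rw [hs]
    exact Ppow _
  have hcompat : ∀ s, f1.comp ((Phi h2 h6 s).toMonoidHom)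
      = (MulAut.conj (f2 s)).toMonoidHom.comp f1 := fun s =>
    MonoidHom.ext fun n => by
      simpa [MonoidHom.comp_apply, MulAut.conj_apply, MulEquiv.coe_toMonoidHom] using Pall s n
  let Ψ : Gm h2 h6 →* PG := SemidirectProduct.lift f1 f2 hcompat
  have hΨsurj : Function.Surjective Ψ := by
    rw [← MonoidHom.range_eq_top, eq_top_iff, ← PresentedGroup.closure_range_of (paperRels p)]
    refine Subgroup.closure_le _ |>.mpr ?_
    rintro x ⟨i, rfl⟩
    fin_cases i
    · refine ⟨inr t0, ?_⟩
      rw [SemidirectProduct.lift_inr]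
      show A ^ (Multiplicative.toAdd (t0 : Multiplicative (ZMod p))).val = _
      show A ^ (1 : ZMod p).val = _
      rw [ZMod.val_one, pow_one]
      rfl
    · exact ⟨inl m1, by rw [SemidirectProduct.lift_inl]; exact fm1⟩
    · exact ⟨inl m2, by rw [SemidirectProduct.lift_inl]; exact fm2⟩
    · exact ⟨inl m3, by rw [SemidirectProduct.lift_inl]; exact fm3⟩
    · exact ⟨inl m4, by rw [SemidirectProduct.lift_inl]; exact fm4⟩
  -- the homomorphism from PG onto the model
  have hrelsGm : ∀ r ∈ paperRels p, FreeGroup.lift (Fgen h2 h6) r = 1 := by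
    intro r hr
    simp only [paperRels, Set.mem_union, Set.mem_range, Set.mem_insert_iff,
      Set.mem_singleton_iff] at hr
    rcases hr with ((⟨i, rfl⟩ | ⟨i, rfl⟩) | rfl | rfl | rfl | rfl | rfl | rfl)
    · rw [map_pow, FreeGroup.lift_apply_of]; exact Fgen_pow_p h2 h6 i
    · simp only [cmt, map_mul, map_inv, FreeGroup.lift_apply_of]
      exact St13.rel_of_comm (M4central h2 h6 i)
    · simp only [cmt, map_mul, map_inv, FreeGroup.lift_apply_of]
      exact St13.rel_of_eq (M10 h2 h6)
    · simp only [cmt, map_mul, map_inv, FreeGroup.lift_apply_of]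
      exact St13.rel_of_eq (M20 h2 h6)
    · simp only [cmt, map_mul, map_inv, FreeGroup.lift_apply_of]
      exact St13.rel_of_eq (M30 h2 h6)
    · simp only [cmt, map_mul, map_inv, FreeGroup.lift_apply_of]
      exact St13.rel_of_eq (M21 h2 h6)
    · simp only [cmt, map_mul, map_inv, FreeGroup.lift_apply_of]
      exact St13.rel_of_comm (M31 h2 h6)
    · simp only [cmt, map_mul, map_inv, FreeGroup.lift_apply_of]
      exact St13.rel_of_comm (M32 h2 h6)
  let θ : PG →* Gm h2 h6 := PresentedGroup.toGroup hrelsGm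
  have hθof : ∀ i, θ (PresentedGroup.of i) = Fgen h2 h6 i := fun i =>
    PresentedGroup.toGroup.of hrelsGm
  have hθsurj : Function.Surjective θ := by
    rw [← MonoidHom.range_eq_top, eq_top_iff]
    intro x _
    have hmem : ∀ i, Fgen h2 h6 i ∈ θ.range := fun i => ⟨PresentedGroup.of i, hθof i⟩
    have hinl : ∀ n : Hp p, (inl n : Gm h2 h6) ∈ θ.range := by
      intro n
      rw [hp_decomp n, map_mul inl, map_mul inl, map_mul inl,
        map_pow inl, map_pow inl, map_pow inl, map_pow inl]
      exact mul_mem (pow_mem (hmem 1) _) (mul_mem (pow_mem (hmem 2) _)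
        (mul_mem (pow_mem (hmem 3) _) (pow_mem (hmem 4) _)))
    have hinr : ∀ g : Multiplicative (ZMod p), (inr g : Gm h2 h6) ∈ θ.range := by
      intro g
      have hg : (inr g : Gm h2 h6) = (inr (t0 : Multiplicative (ZMod p))) ^ (Multiplicative.toAdd g).val := by
        rw [← map_pow, t0_pow]
        congr 1
        rw [ZMod.natCast_val, ZMod.cast_id, ofAdd_toAdd]
      rw [hg]
      exact pow_mem (hmem 0) _
    rw [show x = inl x.left * inr x.right from (inl_left_mul_inr_right x).symm]
    exact mul_mem (hinl _) (hinr _)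
  -- conclusion
  haveI : Finite (Gm h2 h6) := Finite.of_equiv _ (gmEquiv h2 h6).symm
  haveI : Finite PG := Finite.of_surjective Ψ hΨsurj
  have le1 : Nat.card PG ≤ p ^ 5 := by
    rw [← cardGm]; exact Nat.card_le_card_of_surjective Ψ hΨsurj
  have le2 : p ^ 5 ≤ Nat.card PG := by
    rw [← cardGm]; exact Nat.card_le_card_of_surjective θ hθsurj
  omega
end

section
/- Let T be a triangulated category with arbitrary coproducts, and let S be the smallest localizing subcategory of T containing a given set P of compact objects of T. Suppose the inclusion S → T has a right adjoint C : T → S with counit ε : C(X) → X. Then for every object X of T, every object P ∈ P, and every integer a, the induced map Hom_T(P[a], C(X)) → Hom_T(P[a], X) is a bijection; moreover an object Y of S with Hom(P[a], Y) = 0 for all P ∈ P and a ∈ ℤ is zero, so C(X) is determined up to isomorphism by these properties. -/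
/-!
STATEMENT 14: for the Bousfield colocalization `C : T → S` with respect to a set
`P` of compact objects generating the localizing subcategory `S`, the counit
`C(X) → X` induces bijections `Hom(P[a], C(X)) ≃ Hom(P[a], X)`; an object of `S`
with no nonzero maps from the `P[a]` is zero; hence `C(X)` is determined up to
isomorphism by these properties.
-/

open CategoryTheory CategoryTheory.Limits CategoryTheory.Pretriangulated Opposite ZeroObject

universe v u

variable {C : Type u} [Category.{v} C] [Preadditive C] [HasZeroObject C]
  [HasShift C ℤ] [∀ n : ℤ, (shiftFunctor C n).Additive] [Pretriangulated C]
  [HasCoproducts.{v} C]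

/-- A localizing subcategory: a strictly full triangulated subcategory closed under
arbitrary (small) coproducts. -/
structure IsLocalizingSub (S : Set C) extends IsTriangulatedSub S : Prop where
  coproduct_mem : ∀ {ι : Type v} (f : ι → C), (∀ i, f i ∈ S) → (∐ f) ∈ S

/-- An object `X` is compact if `Hom(X, -)` commutes with arbitrary coproducts. -/
def IsCompactObj (X : C) : Prop :=
  ∀ ι : Type v, Nonempty (PreservesColimitsOfShape (Discrete ι)
    (preadditiveCoyoneda.obj (op X)))

/-- Auxiliary: an object of `S` receiving no nonzero maps from shifts of objects of `P`
is zero. -/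
lemma aux_isZero_of_no_maps
    (P : Set C) (S : Set C) (hS : IsLocalizingSub S) (hPS : P ⊆ S)
    (hmin : ∀ (S' : Set C), IsLocalizingSub S' → P ⊆ S' → S ⊆ S')
    (Y : C) (hY : Y ∈ S)
    (hvan : ∀ Q ∈ P, ∀ a : ℤ, ∀ f : (Q⟦a⟧ : C) ⟶ Y, f = 0) : IsZero Y := by
  set S' : Set C := {Z : C | ∀ a : ℤ, ∀ f : (Z⟦a⟧ : C) ⟶ Y, f = 0} with hS'def
  have hiso : ∀ {A B : C}, (A ≅ B) → (∀ f : A ⟶ Y, f = 0) → (∀ f : B ⟶ Y, f = 0) := by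
    intro A B e h f
    have h0 : e.hom ≫ f = 0 := h _
    calc f = e.inv ≫ (e.hom ≫ f) := by simp
    _ = 0 := by rw [h0, Limits.comp_zero]
  have hloc : IsLocalizingSub S' := by
    refine ⟨⟨?_, ?_, ?_, ?_⟩, ?_⟩
    · intro a f
      exact ((shiftFunctor C a).map_isZero (isZero_zero C)).eq_of_src f 0
    · intro A B e hA a
      exact hiso ((shiftFunctor C a).mapIso e) (hA a)
    · intro A n hA a
      exact hiso ((shiftFunctorAdd C n a).app A) (fun f => hA (n + a) f)
    · intro T hT h1 h2 a f
      have hT' := Pretriangulated.Triangle.shift_distinguished T hT a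
      obtain ⟨g, hg⟩ := Pretriangulated.Triangle.yoneda_exact₃ _ hT' f (h2 a _)
      have hg0 : g = 0 :=
        hiso ((shiftFunctorAdd' C a 1 (a + 1) rfl).app T.obj₁) (h1 (a + 1)) g
      rw [hg, hg0, Limits.comp_zero]; rfl
    · intro ι f hf a g
      have hz : sigmaComparison (shiftFunctor C a) f ≫ g = 0 := by
        apply colimit.hom_ext
        intro j
        rw [Limits.comp_zero]
        exact hf j.as a _
      have hepi : Epi (sigmaComparison (shiftFunctor C a) f) := by infer_instance
      rw [← cancel_epi (sigmaComparison (shiftFunctor C a) f), hz, Limits.comp_zero]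
  have hY' : Y ∈ S' := hmin S' hloc (fun Q hQ a f => hvan Q hQ a f) hY
  have h0 : ((shiftFunctorZero C ℤ).hom.app Y : (Y⟦(0 : ℤ)⟧ : C) ⟶ Y) = 0 := hY' 0 _
  rw [IsZero.iff_id_eq_zero]
  calc 𝟙 Y = (shiftFunctorZero C ℤ).inv.app Y ≫ (shiftFunctorZero C ℤ).hom.app Y := by simp
  _ = 0 := by rw [h0, Limits.comp_zero]

theorem colocalization_counit_bijective_and_uniqueness
    (P : Set C) (hP : ∀ X ∈ P, IsCompactObj X)
    (S : Set C) (hS : IsLocalizingSub S) (hPS : P ⊆ S)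
    (hmin : ∀ (S' : Set C), IsLocalizingSub S' → P ⊆ S' → S ⊆ S')
    (Cfun : C ⥤ ObjectProperty.FullSubcategory (· ∈ S))
    (adj : ObjectProperty.ι (· ∈ S) ⊣ Cfun) :
    -- the counit induces bijections on maps from the `P[a]`
    (∀ (X : C), ∀ Q ∈ P, ∀ a : ℤ,
      Function.Bijective (fun f : (Q⟦a⟧ : C) ⟶ (Cfun.obj X).obj =>
        f ≫ adj.counit.app X)) ∧
    -- an object of `S` with no nonzero maps from the `P[a]` is zero
    (∀ Y : C, Y ∈ S → (∀ Q ∈ P, ∀ a : ℤ, ∀ f : (Q⟦a⟧ : C) ⟶ Y, f = 0) → IsZero Y) ∧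
    -- hence `C(X)` is determined up to isomorphism by these properties
    (∀ (X Z : C), Z ∈ S → ∀ g : Z ⟶ X,
      (∀ Q ∈ P, ∀ a : ℤ, Function.Bijective (fun f : (Q⟦a⟧ : C) ⟶ Z => f ≫ g)) →
      Nonempty (Z ≅ (Cfun.obj X).obj)) := by
  have part1 : ∀ (X : C), ∀ Q ∈ P, ∀ a : ℤ,
      Function.Bijective (fun f : (Q⟦a⟧ : C) ⟶ (Cfun.obj X).obj =>
        f ≫ adj.counit.app X) := by
    intro X Q hQ a
    have hmem : (Q⟦a⟧ : C) ∈ S := hS.shift_mem Q a (hPS hQ)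
    have heq : (fun f : (Q⟦a⟧ : C) ⟶ (Cfun.obj X).obj => f ≫ adj.counit.app X)
        = fun f => (adj.homEquiv (⟨Q⟦a⟧, hmem⟩ : ObjectProperty.FullSubcategory (· ∈ S)) X).symm (ObjectProperty.homMk f) := by
      funext f
      rw [Adjunction.homEquiv_counit]
      rfl
    rw [heq]
    exact (adj.homEquiv _ X).symm.bijective.comp InducedCategory.homEquiv.symm.bijective
  have part2 : ∀ Y : C, Y ∈ S →
      (∀ Q ∈ P, ∀ a : ℤ, ∀ f : (Q⟦a⟧ : C) ⟶ Y, f = 0) → IsZero Y :=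
    fun Y hY hvan => aux_isZero_of_no_maps P S hS hPS hmin Y hY hvan
  refine ⟨part1, part2, ?_⟩
  intro X Z hZ g hbij
  let g' : Z ⟶ (Cfun.obj X).obj := (adj.homEquiv ⟨Z, hZ⟩ X g).hom
  have hg' : g' ≫ adj.counit.app X = g := by
    have h1 := (adj.homEquiv ⟨Z, hZ⟩ X).symm_apply_apply g
    rw [Adjunction.homEquiv_counit] at h1; exact h1
  have hbij' : ∀ Q ∈ P, ∀ a : ℤ,
      Function.Bijective (fun f : (Q⟦a⟧ : C) ⟶ Z => f ≫ g') := by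
    intro Q hQ a
    have hC := part1 X Q hQ a
    have hg := hbij Q hQ a
    have hcomp : (fun f : (Q⟦a⟧ : C) ⟶ Z => f ≫ g) =
        (fun u : (Q⟦a⟧ : C) ⟶ (Cfun.obj X).obj => u ≫ adj.counit.app X) ∘
          (fun f => f ≫ g') := by
      funext f
      simp only [Function.comp_apply, Category.assoc, hg']
    rw [hcomp] at hg
    exact (Function.Bijective.of_comp_iff' hC _).mp hg
  obtain ⟨W, m₂, m₃, hT⟩ := Pretriangulated.distinguished_cocone_triangle g'
  have hW : W ∈ S := hS.ext_mem _ hT hZ (Cfun.obj X).2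
  have hWzero : IsZero W := by
    apply part2 W hW
    intro Q hQ a f
    have h3 : f ≫ m₃ = 0 := by
      set e : (Q⟦a - 1⟧ : C) ≅ ((Q⟦a⟧ : C)⟦(-1 : ℤ)⟧) :=
        (shiftFunctorAdd' C a (-1) (a - 1) (by ring)).app Q with he
      set ε : shiftFunctor C (1 : ℤ) ⋙ shiftFunctor C (-1 : ℤ) ≅ 𝟭 C :=
        shiftFunctorCompIsoId C 1 (-1) (by ring) with hε
      set k : (Q⟦a - 1⟧ : C) ⟶ Z :=
        e.hom ≫ ((f ≫ m₃)⟦(-1 : ℤ)⟧') ≫ ε.hom.app Z with hk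
      have hkg : k ≫ g' = 0 := by
        have hnat : ((g'⟦(1 : ℤ)⟧')⟦(-1 : ℤ)⟧') ≫ ε.hom.app (Cfun.obj X).obj
            = ε.hom.app Z ≫ g' := ε.hom.naturality g'
        have hzero : f ≫ m₃ ≫ g'⟦(1 : ℤ)⟧' = 0 := by
          have h31 : m₃ ≫ g'⟦(1 : ℤ)⟧' = 0 :=
            Pretriangulated.comp_distTriang_mor_zero₃₁ _ hT
          rw [h31, Limits.comp_zero]
        calc k ≫ g'
            = e.hom ≫ ((f ≫ m₃)⟦(-1 : ℤ)⟧') ≫ (ε.hom.app Z ≫ g') := by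
              rw [hk]; simp only [Category.assoc]
          _ = e.hom ≫ ((f ≫ m₃)⟦(-1 : ℤ)⟧') ≫ ((g'⟦(1 : ℤ)⟧')⟦(-1 : ℤ)⟧')
              ≫ ε.hom.app (Cfun.obj X).obj := by rw [hnat]
          _ = e.hom ≫ (((f ≫ m₃ ≫ g'⟦(1 : ℤ)⟧'))⟦(-1 : ℤ)⟧')
              ≫ ε.hom.app (Cfun.obj X).obj := by
              simp only [Functor.map_comp, Category.assoc]
          _ = 0 := by rw [hzero]; simp
      have hk0 : k = 0 := by
        apply (hbij' Q hQ (a - 1)).1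
        simp only [hkg, Limits.zero_comp]
      have hm0 : (f ≫ m₃)⟦(-1 : ℤ)⟧' = 0 := by
        have := hk0
        rw [hk] at this
        rw [← cancel_epi e.hom, ← cancel_mono (ε.hom.app Z)]
        simpa using this
      apply (shiftFunctor C (-1 : ℤ)).map_injective
      rw [hm0, Functor.map_zero]
    obtain ⟨u, hu⟩ := Pretriangulated.Triangle.coyoneda_exact₃ _ hT f h3
    obtain ⟨v, hv⟩ := (hbij' Q hQ a).2 u
    have hm : g' ≫ m₂ = 0 := Pretriangulated.comp_distTriang_mor_zero₁₂ _ hT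
    rw [hu, ← hv]
    show (v ≫ g') ≫ m₂ = 0
    rw [Category.assoc, hm, Limits.comp_zero]
  have : IsIso g' := (Pretriangulated.Triangle.isZero₃_iff_isIso₁ _ hT).1 hWzero
  exact ⟨asIso g'⟩
end
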